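/- arXiv:1510.04837 — 3 statements merged into one kernel-verified Lean document; each statement's English description precedes it below -/
import Mathlib

section
/- Let α > −1 be real and define, for integers m, p ≥ 0 and n = m + 2p, J_{nm}^{α}(ρ) = ((α+1)_{p+m}/(p+m)!) · ρ^m P_p^{(α,m)}(2ρ²−1), with the conventions J_{nm}^{α} = 0 whenever n < m and J_{00}^{α} = 1. Then for all integers n, m ≥ 0 with n + 1 − m even and nonnegative, and every ρ ∈ [0,1], J_{n+1,m}^{α}(ρ) = ((n+α+1)/(n+1)) ρ [ J_{n,|m−1|}^{α}(ρ) + J_{n,m+1}^{α}(ρ) ] − ((n+2α+1)/(n+1)) J_{n−1,m}^{α}(ρ). In particular, for α = 0 this reduces to the Shakibaei–Paramesran recursion ²R_n^{m,0}(ρ) = ρ[²R_{n−1}^{|m−1|,0}(ρ) + ²R_{n−1}^{m+1,0}(ρ)] − ²R_{n−2}^{m,0}(ρ) for the radial parts of the standard 2D Zernike circle polynomials. -/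
open Real MeasureTheory

noncomputable def genBinom (a : ℝ) (p : ℕ) : ℝ :=
  (∏ j ∈ Finset.range p, (a - j)) / (Nat.factorial p : ℝ)

noncomputable def jacobiP (k : ℕ) (a b : ℝ) (x : ℝ) : ℝ :=
  ∑ j ∈ Finset.range (k + 1),
    genBinom ((k : ℝ) + a) (k - j) * genBinom ((k : ℝ) + b) j *
      ((x - 1) / 2) ^ j * ((x + 1) / 2) ^ (k - j)

/-- generalized Pochhammer symbol `(x)_α = Γ(x+α)/Γ(x)` -/
noncomputable def pochG (x α : ℝ) : ℝ := Real.Gamma (x + α) / Real.Gamma x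

/-- integer-order Pochhammer symbol `(x)_k = x(x+1)⋯(x+k−1)` -/
noncomputable def pochN (x : ℝ) (k : ℕ) : ℝ := ∏ j ∈ Finset.range k, (x + j)

/-- generalized 3D Zernike radial function `R_{l+2p}^{l,α}` -/
noncomputable def R3 (α : ℝ) (l p : ℕ) (ρ : ℝ) : ℝ :=
  ρ ^ l * (1 - ρ ^ 2) ^ α * jacobiP p α ((l : ℝ) + 1 / 2) (2 * ρ ^ 2 - 1)

/-- generalized 2D Zernike radial function `²R_{m+2p}^{m,α}` -/
noncomputable def R2 (α : ℝ) (m p : ℕ) (ρ : ℝ) : ℝ :=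
  ρ ^ m * (1 - ρ ^ 2) ^ α * jacobiP p α (m : ℝ) (2 * ρ ^ 2 - 1)

/-- spherical Bessel function of real order `a` -/
noncomputable def sphBessel (a : ℝ) (z : ℝ) : ℝ :=
  Real.sqrt π / 2 * (z / 2) ^ a *
    ∑' k : ℕ, (-(z ^ 2) / 4) ^ k / ((Nat.factorial k : ℝ) * Real.Gamma ((k : ℝ) + a + 3 / 2))

/-- Gegenbauer polynomial `C_n^λ` -/
noncomputable def gegenbauer (n : ℕ) (lam : ℝ) (x : ℝ) : ℝ :=
  ∑ k ∈ Finset.range (n / 2 + 1),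
    (-1) ^ k * Real.Gamma (((n - k : ℕ) : ℝ) + lam) /
      (Real.Gamma lam * (Nat.factorial k : ℝ) * (Nat.factorial (n - 2 * k) : ℝ)) *
      (2 * x) ^ (n - 2 * k)

/-- Legendre polynomial `P_l` -/
noncomputable def legendreFun (l : ℕ) (x : ℝ) : ℝ :=
  (1 / 2 ^ l) * ∑ k ∈ Finset.range (l + 1),
    ((Nat.choose l k : ℝ)) ^ 2 * (x - 1) ^ (l - k) * (x + 1) ^ k

/-- associated Legendre function `P_l^m` -/
noncomputable def assocLegendre (l m : ℕ) (x : ℝ) : ℝ :=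
  (1 - x ^ 2) ^ ((m : ℝ) / 2) * iteratedDeriv m (legendreFun l) x

/-- spherical harmonic `Y_l^m`, evaluated at a (unit) vector `v ∈ ℝ³`:
`cos θ = v 2`, `φ = arg (v 0 + i v 1)`. -/
noncomputable def sphHarm (l : ℕ) (m : ℤ) (v : EuclideanSpace ℝ (Fin 3)) : ℂ :=
  (-1 : ℂ) ^ m *
    (Real.sqrt ((2 * l + 1) / (4 * π) *
      (Nat.factorial (l - m.natAbs) : ℝ) / (Nat.factorial (l + m.natAbs) : ℝ)) : ℝ) *
    (assocLegendre l m.natAbs (v 2) : ℝ) *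
    Complex.exp (Complex.I * m * (Complex.arg (v 0 + Complex.I * v 1) : ℝ))

/-- generalized 3D Zernike function `Z_{nl}^{m,α}` on ℝ³ -/
noncomputable def Z3 (α : ℝ) (l p : ℕ) (m : ℤ) (ω : EuclideanSpace ℝ (Fin 3)) : ℂ :=
  (R3 α l p ‖ω‖ : ℝ) * sphHarm l m (‖ω‖⁻¹ • ω)

/-- `J_{nm}^α(ρ) = ((α+1)_{p+m}/(p+m)!) ρ^m P_p^{(α,m)}(2ρ²−1)` for `n = m + 2p`,
with the convention `J_{nm}^α = 0` when `n < m` (in particular `J_{−1,m}^α = 0`). -/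
noncomputable def Jfun (α : ℝ) (n : ℤ) (m : ℕ) (ρ : ℝ) : ℝ :=
  if n < (m : ℤ) then 0
  else
    pochN (α + 1) (((n - m) / 2).toNat + m) / (Nat.factorial (((n - m) / 2).toNat + m) : ℝ) *
      ρ ^ m * jacobiP ((n - m) / 2).toNat α (m : ℝ) (2 * ρ ^ 2 - 1)

namespace S13

noncomputable def cc (α : ℝ) (k : ℕ) : ℝ := pochN (α+1) k / (Nat.factorial k : ℝ)

lemma factorial_cast_ne (k : ℕ) : (Nat.factorial k : ℝ) ≠ 0 :=
  Nat.cast_ne_zero.2 (Nat.factorial_ne_zero k)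

lemma genBinom_zero (a : ℝ) : genBinom a 0 = 1 := by simp [genBinom]

lemma jacobiP_eval (q : ℕ) (a b t : ℝ) :
    jacobiP q a b (2*t - 1) = ∑ j ∈ Finset.range (q+1),
      genBinom ((q:ℝ)+a) (q-j) * genBinom ((q:ℝ)+b) j * (t-1)^j * t^(q-j) := by
  unfold jacobiP
  rw [show (2*t - 1 - 1)/2 = t - 1 by ring, show (2*t - 1 + 1)/2 = t by ring]

lemma genBinom_succ_right (x : ℝ) (k : ℕ) :
    genBinom x (k + 1) * ((k : ℝ) + 1) = (x - k) * genBinom x k := by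
  unfold genBinom
  rw [Finset.prod_range_succ, Nat.factorial_succ]
  have hk := factorial_cast_ne k
  push_cast
  field_simp

lemma genBinom_succ_left (x : ℝ) (k : ℕ) :
    genBinom (x + 1) (k + 1) * ((k : ℝ) + 1) = (x + 1) * genBinom x k := by
  unfold genBinom
  rw [Finset.prod_range_succ', Nat.factorial_succ]
  have hk := factorial_cast_ne k
  have h : ∏ i ∈ Finset.range k, (x + 1 - ((i + 1 : ℕ) : ℝ)) = ∏ i ∈ Finset.range k, (x - i) :=
    Finset.prod_congr rfl fun i _ => by push_cast; ring
  rw [h]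
  push_cast
  field_simp
  ring

lemma genBinom_shift (x : ℝ) (k : ℕ) :
    genBinom (x + 1) k * (x + 1 - k) = (x + 1) * genBinom x k := by
  unfold genBinom
  have hk := factorial_cast_ne k
  have h : (∏ i ∈ Finset.range k, (x + 1 - i)) * (x + 1 - k)
      = (x + 1) * ∏ i ∈ Finset.range k, (x - i) := by
    rw [← Finset.prod_range_succ (fun i => x + 1 - (i : ℝ)) k, Finset.prod_range_succ']
    have h2 : ∏ i ∈ Finset.range k, (x + 1 - ((i + 1 : ℕ) : ℝ)) = ∏ i ∈ Finset.range k, (x - i) :=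
      Finset.prod_congr rfl fun i _ => by push_cast; ring
    rw [h2]
    push_cast
    ring
  field_simp
  linear_combination h

lemma cc_succ (α : ℝ) (k : ℕ) : cc α (k+1) * ((k : ℝ) + 1) = (α + 1 + k) * cc α k := by
  unfold cc pochN
  rw [Finset.prod_range_succ, Nat.factorial_succ]
  have hk := factorial_cast_ne k
  push_cast
  field_simp

lemma genBinom_cast_zero (p : ℕ) (hp : 1 ≤ p) : genBinom ((p:ℝ) - 1) p = 0 := by
  unfold genBinom
  have hmem : p - 1 ∈ Finset.range p := Finset.mem_range.2 (by omega)
  rw [Finset.prod_eq_zero hmem (by push_cast [Nat.cast_sub hp]; ring)]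
  simp

-- division forms
lemma gB_left_div (x : ℝ) {a b : ℕ} (hb : b = a + 1) :
    genBinom (x + 1) b = (x + 1) * genBinom x a / ((b : ℝ)) := by
  subst hb
  rw [eq_div_iff (by exact_mod_cast Nat.succ_ne_zero a)]
  push_cast
  exact genBinom_succ_left x a

lemma gB_right_div (x : ℝ) {a b : ℕ} (hb : b = a + 1) :
    genBinom x b = (x - a) * genBinom x a / ((b : ℝ)) := by
  subst hb
  rw [eq_div_iff (by exact_mod_cast Nat.succ_ne_zero a)]
  push_cast
  exact genBinom_succ_right x a

lemma gB_shift_div (x : ℝ) (k : ℕ) (h : x + 1 - k ≠ 0) :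
    genBinom (x + 1) k = (x + 1) * genBinom x k / (x + 1 - k) := by
  rw [eq_div_iff h]
  exact genBinom_shift x k

set_option maxHeartbeats 1000000 in
lemma coeff_id (α : ℝ) (p m j : ℕ) (hp : 1 ≤ p) (hj : j ≤ p) :
    cc α (p+m) * (genBinom ((p:ℝ)+α) (p-j) * genBinom ((p:ℝ)+(m:ℝ)) j)
    = (((m:ℝ)+2*p+α)/((m:ℝ)+2*p)) *
        ( cc α (p+m-1) * (genBinom ((p:ℝ)+α) (p-j) * genBinom ((p:ℝ)+(m:ℝ)-1) j)
          + cc α (p+m) * (if j < p then genBinom ((p:ℝ)+α-1) (p-1-j) * genBinom ((p:ℝ)+(m:ℝ)) j else 0) )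
      - (((m:ℝ)+2*p+2*α)/((m:ℝ)+2*p)) * cc α (p+m-1) *
        ((if j < p then genBinom ((p:ℝ)+α-1) (p-1-j) * genBinom ((p:ℝ)+(m:ℝ)-1) j else 0)
          - (if j = 0 then 0 else genBinom ((p:ℝ)+α-1) (p-j) * genBinom ((p:ℝ)+(m:ℝ)-1) (j-1))) := by
  have hm2p : ((m:ℝ)+2*(p:ℝ)) ≠ 0 := by
    have h1 : (1:ℝ) ≤ (p:ℝ) := by exact_mod_cast hp
    have h2 : (0:ℝ) ≤ (m:ℝ) := Nat.cast_nonneg m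
    nlinarith
  have hpm : ((p:ℝ)+(m:ℝ)) ≠ 0 := by
    have h1 : (1:ℝ) ≤ (p:ℝ) := by exact_mod_cast hp
    have h2 : (0:ℝ) ≤ (m:ℝ) := Nat.cast_nonneg m
    nlinarith
  have h5 : cc α (p+m) = (α+(p:ℝ)+(m:ℝ)) * cc α (p+m-1) / ((p:ℝ)+(m:ℝ)) := by
    have hcs := cc_succ α (p+m-1)
    rw [show p+m-1+1 = p+m by omega] at hcs
    have hc : ((p+m-1 : ℕ):ℝ) = (p:ℝ)+(m:ℝ)-1 := by
      push_cast [Nat.cast_sub (show 1 ≤ p+m by omega)]; ring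
    rw [hc] at hcs
    rw [eq_div_iff hpm]; linear_combination hcs
  rcases eq_or_lt_of_le hj with rfl | hjp
  · -- j = p case (p replaced by j)
    simp only [if_neg (lt_irrefl j), if_neg (show ¬ j = 0 by omega)]
    simp only [Nat.sub_self, genBinom_zero, one_mul]
    rcases Nat.eq_zero_or_pos m with rfl | hm
    · simp only [Nat.cast_zero, add_zero, Nat.add_zero, zero_add]
      have hjne : ((j:ℝ)) ≠ 0 := by
        have : (1:ℝ) ≤ (j:ℝ) := by exact_mod_cast hp
        linarith
      have hz : genBinom ((j:ℝ) - 1) j = 0 := genBinom_cast_zero j hp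
      have h1 : genBinom ((j:ℝ)) j = (j:ℝ) * genBinom ((j:ℝ)-1) (j-1) / ((j:ℝ)) := by
        have h := gB_left_div ((j:ℝ)-1) (show j = (j-1)+1 by omega)
        rw [show (j:ℝ)-1+1 = (j:ℝ) by ring] at h
        exact h
      have h5' : cc α j = (α+(j:ℝ)) * cc α (j-1) / (j:ℝ) := by
        have hcs := cc_succ α (j-1)
        rw [show j-1+1 = j by omega] at hcs
        have hc : ((j-1 : ℕ):ℝ) = (j:ℝ)-1 := by push_cast [Nat.cast_sub hp]; ring
        rw [hc] at hcs
        rw [eq_div_iff hjne]; linear_combination hcs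
      rw [h1, hz, h5']
      generalize cc α (j-1) = c1
      generalize genBinom ((j:ℝ)-1) (j-1) = u
      field_simp
      ring
    · have hM : ((m:ℝ)) ≠ 0 := by
        have : (1:ℝ) ≤ (m:ℝ) := by exact_mod_cast hm
        linarith
      have hA : genBinom ((j:ℝ)+(m:ℝ)) j
          = ((j:ℝ)+(m:ℝ)) * genBinom ((j:ℝ)+(m:ℝ)-1) j / ((m:ℝ)) := by
        have h := gB_shift_div ((j:ℝ)+(m:ℝ)-1) j (by
          rw [show (j:ℝ)+(m:ℝ)-1+1-(j:ℝ) = (m:ℝ) by ring]; exact hM)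
        rw [show (j:ℝ)+(m:ℝ)-1+1 = (j:ℝ)+(m:ℝ) by ring] at h
        rw [show (j:ℝ)+(m:ℝ)-(j:ℝ) = (m:ℝ) by ring] at h
        exact h
      have hB : genBinom ((j:ℝ)+(m:ℝ)-1) (j-1)
          = (j:ℝ) * genBinom ((j:ℝ)+(m:ℝ)-1) j / ((m:ℝ)) := by
        have h := genBinom_succ_right ((j:ℝ)+(m:ℝ)-1) (j-1)
        rw [show (j-1)+1 = j by omega] at h
        have hc : ((j-1 : ℕ):ℝ) = (j:ℝ)-1 := by push_cast [Nat.cast_sub hp]; ring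
        rw [hc] at h
        rw [eq_div_iff hM]
        linear_combination -h
      rw [hA, hB, h5]
      generalize cc α (j+m-1) = c1
      generalize genBinom ((j:ℝ)+(m:ℝ)-1) j = w
      field_simp
      ring
  · -- j < p case
    simp only [if_pos hjp]
    have hPJ : ((p:ℝ) - (j:ℝ)) ≠ 0 := by
      have : (j:ℝ) < (p:ℝ) := by exact_mod_cast hjp
      linarith
    have hPMJ : ((p:ℝ)+(m:ℝ)-(j:ℝ)) ≠ 0 := by
      have h1 : (j:ℝ) < (p:ℝ) := by exact_mod_cast hjp
      have h2 : (0:ℝ) ≤ (m:ℝ) := Nat.cast_nonneg m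
      nlinarith
    have hcastpj : ((p-j : ℕ):ℝ) = (p:ℝ)-(j:ℝ) := by
      push_cast [Nat.cast_sub hj]; ring
    have hcastp1j : ((p-1-j : ℕ):ℝ) = (p:ℝ)-1-(j:ℝ) := by
      push_cast [Nat.cast_sub (show j ≤ p-1 by omega), Nat.cast_sub hp]; ring
    have h1 : genBinom ((p:ℝ)+α) (p-j)
        = ((p:ℝ)+α) * genBinom ((p:ℝ)+α-1) (p-1-j) / ((p:ℝ)-(j:ℝ)) := by
      have h := gB_left_div ((p:ℝ)+α-1) (show p-j = (p-1-j)+1 by omega)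
      rw [show (p:ℝ)+α-1+1 = (p:ℝ)+α by ring, hcastpj] at h
      exact h
    have h2 : genBinom ((p:ℝ)+(m:ℝ)) j
        = ((p:ℝ)+(m:ℝ)) * genBinom ((p:ℝ)+(m:ℝ)-1) j / ((p:ℝ)+(m:ℝ)-(j:ℝ)) := by
      have h := gB_shift_div ((p:ℝ)+(m:ℝ)-1) j (by
        rw [show (p:ℝ)+(m:ℝ)-1+1-(j:ℝ) = (p:ℝ)+(m:ℝ)-(j:ℝ) by ring]; exact hPMJ)
      rw [show (p:ℝ)+(m:ℝ)-1+1 = (p:ℝ)+(m:ℝ) by ring] at h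
      exact h
    rcases Nat.eq_zero_or_pos j with rfl | hj1
    · simp only [if_pos rfl]
      rw [h1, h2, h5]
      generalize cc α (p+m-1) = c1
      generalize genBinom ((p:ℝ)+α-1) (p-1-0) = u
      generalize genBinom ((p:ℝ)+(m:ℝ)-1) 0 = w
      push_cast
      have hp0 : (p:ℝ) ≠ 0 := by simpa using hPJ
      field_simp
      ring
    · simp only [if_neg (show ¬ j = 0 by omega)]
      have h3 : genBinom ((p:ℝ)+α-1) (p-j)
          = (α+(j:ℝ)) * genBinom ((p:ℝ)+α-1) (p-1-j) / ((p:ℝ)-(j:ℝ)) := by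
        have h := gB_right_div ((p:ℝ)+α-1) (show p-j = (p-1-j)+1 by omega)
        rw [hcastpj, hcastp1j, show (p:ℝ)+α-1-((p:ℝ)-1-(j:ℝ)) = α+(j:ℝ) by ring] at h
        exact h
      have h4 : genBinom ((p:ℝ)+(m:ℝ)-1) (j-1)
          = (j:ℝ) * genBinom ((p:ℝ)+(m:ℝ)-1) j / ((p:ℝ)+(m:ℝ)-(j:ℝ)) := by
        have h := genBinom_succ_right ((p:ℝ)+(m:ℝ)-1) (j-1)
        rw [show (j-1)+1 = j by omega] at h
        have hc : ((j-1 : ℕ):ℝ) = (j:ℝ)-1 := by push_cast [Nat.cast_sub hj1]; ring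
        rw [hc] at h
        rw [eq_div_iff hPMJ]
        linear_combination -h
      rw [h1, h2, h3, h4, h5]
      generalize cc α (p+m-1) = c1
      generalize genBinom ((p:ℝ)+α-1) (p-1-j) = u
      generalize genBinom ((p:ℝ)+(m:ℝ)-1) j = w
      field_simp
      ring

lemma master (α t : ℝ) (p m : ℕ) (hp : 1 ≤ p) :
    cc α (p+m) * ∑ j ∈ Finset.range (p+1),
        genBinom ((p:ℝ)+α) (p-j) * genBinom ((p:ℝ)+(m:ℝ)) j * (t-1)^j * t^(p-j)
    = (((m:ℝ)+2*p+α)/((m:ℝ)+2*p)) *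
        ( cc α (p+m-1) * ∑ j ∈ Finset.range (p+1),
            genBinom ((p:ℝ)+α) (p-j) * genBinom ((p:ℝ)+(m:ℝ)-1) j * (t-1)^j * t^(p-j)
          + cc α (p+m) * (t * ∑ j ∈ Finset.range p,
              genBinom ((p:ℝ)+α-1) (p-1-j) * genBinom ((p:ℝ)+(m:ℝ)) j * (t-1)^j * t^(p-1-j)) )
      - (((m:ℝ)+2*p+2*α)/((m:ℝ)+2*p)) * cc α (p+m-1) * ∑ j ∈ Finset.range p,
          genBinom ((p:ℝ)+α-1) (p-1-j) * genBinom ((p:ℝ)+(m:ℝ)-1) j * (t-1)^j * t^(p-1-j) := by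
  have hS2 : t * ∑ j ∈ Finset.range p,
        genBinom ((p:ℝ)+α-1) (p-1-j) * genBinom ((p:ℝ)+(m:ℝ)) j * (t-1)^j * t^(p-1-j)
      = ∑ j ∈ Finset.range (p+1),
          (if j < p then genBinom ((p:ℝ)+α-1) (p-1-j) * genBinom ((p:ℝ)+(m:ℝ)) j else 0) *
            ((t-1)^j * t^(p-j)) := by
    rw [Finset.mul_sum, Finset.sum_range_succ, if_neg (lt_irrefl p), zero_mul, add_zero]
    refine Finset.sum_congr rfl fun j hj => ?_
    have hj' : j < p := Finset.mem_range.mp hj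
    rw [if_pos hj', show p - j = (p-1-j)+1 by omega, pow_succ]
    ring
  have hS3 : ∑ j ∈ Finset.range p,
        genBinom ((p:ℝ)+α-1) (p-1-j) * genBinom ((p:ℝ)+(m:ℝ)-1) j * (t-1)^j * t^(p-1-j)
      = ∑ j ∈ Finset.range (p+1),
          ((if j < p then genBinom ((p:ℝ)+α-1) (p-1-j) * genBinom ((p:ℝ)+(m:ℝ)-1) j else 0)
            - (if j = 0 then 0 else
                genBinom ((p:ℝ)+α-1) (p-j) * genBinom ((p:ℝ)+(m:ℝ)-1) (j-1))) *
            ((t-1)^j * t^(p-j)) := by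
    simp only [sub_mul]
    rw [Finset.sum_sub_distrib]
    rw [Finset.sum_range_succ, if_neg (lt_irrefl p), zero_mul, add_zero]
    rw [Finset.sum_range_succ']
    simp only [eq_self_iff_true, if_true, zero_mul, add_zero, if_neg (Nat.succ_ne_zero _),
      Nat.add_sub_cancel]
    rw [← Finset.sum_sub_distrib]
    refine Finset.sum_congr rfl fun j hj => ?_
    have hj' : j < p := Finset.mem_range.mp hj
    rw [if_pos hj', show p - (j+1) = p-1-j by omega, show p - j = (p-1-j)+1 by omega,
      pow_succ, pow_succ]
    ring
  rw [hS2, hS3]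
  simp only [mul_add, Finset.mul_sum]
  rw [← Finset.sum_add_distrib, ← Finset.sum_sub_distrib]
  refine Finset.sum_congr rfl fun j hj => ?_
  linear_combination ((t-1)^j * t^(p-j)) * coeff_id α p m j hp (Nat.lt_succ_iff.mp (Finset.mem_range.mp hj))

lemma jacobiP_zero_deg (a b x : ℝ) : jacobiP 0 a b x = 1 := by
  simp [jacobiP, genBinom_zero]

lemma eq10 (α t : ℝ) (p : ℕ) (hp : 1 ≤ p) :
    cc α (p-1) * ∑ j ∈ Finset.range (p+1),
        genBinom ((p:ℝ)+α) (p-j) * genBinom ((p:ℝ)-1) j * (t-1)^j * t^(p-j)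
    = cc α p * (t * ∑ j ∈ Finset.range p,
        genBinom ((p:ℝ)+α-1) (p-1-j) * genBinom ((p:ℝ)) j * (t-1)^j * t^(p-1-j)) := by
  rw [Finset.sum_range_succ, genBinom_cast_zero p hp]
  simp only [mul_zero, zero_mul, add_zero]
  rw [Finset.mul_sum, Finset.mul_sum, Finset.mul_sum]
  refine Finset.sum_congr rfl fun j hj => ?_
  have hjp : j < p := Finset.mem_range.mp hj
  have hPJ : ((p:ℝ) - (j:ℝ)) ≠ 0 := by
    have : (j:ℝ) < (p:ℝ) := by exact_mod_cast hjp
    linarith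
  have hpne : ((p:ℝ)) ≠ 0 := by
    have : (1:ℝ) ≤ (p:ℝ) := by exact_mod_cast hp
    linarith
  have hcastpj : ((p-j : ℕ):ℝ) = (p:ℝ)-(j:ℝ) := by
    push_cast [Nat.cast_sub (le_of_lt hjp)]; ring
  have h1 : genBinom ((p:ℝ)+α) (p-j)
      = ((p:ℝ)+α) * genBinom ((p:ℝ)+α-1) (p-1-j) / ((p:ℝ)-(j:ℝ)) := by
    have h := gB_left_div ((p:ℝ)+α-1) (show p-j = (p-1-j)+1 by omega)
    rw [show (p:ℝ)+α-1+1 = (p:ℝ)+α by ring, hcastpj] at h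
    exact h
  have h2 : genBinom ((p:ℝ)) j = (p:ℝ) * genBinom ((p:ℝ)-1) j / ((p:ℝ)-(j:ℝ)) := by
    have h := gB_shift_div ((p:ℝ)-1) j (by
      rw [show (p:ℝ)-1+1-(j:ℝ) = (p:ℝ)-(j:ℝ) by ring]; exact hPJ)
    rw [show (p:ℝ)-1+1 = (p:ℝ) by ring] at h
    exact h
  have h5 : cc α p = (α+(p:ℝ)) * cc α (p-1) / (p:ℝ) := by
    have hcs := cc_succ α (p-1)
    rw [show p-1+1 = p by omega] at hcs
    have hc : ((p-1 : ℕ):ℝ) = (p:ℝ)-1 := by push_cast [Nat.cast_sub hp]; ring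
    rw [hc] at hcs
    rw [eq_div_iff hpne]; linear_combination hcs
  rw [h1, h2, h5, show p - j = (p-1-j)+1 by omega, pow_succ]
  field_simp
  ring

lemma mainJ (α ρ : ℝ) (p m : ℕ) (hp : 1 ≤ p) :
    cc α (p+m+1) * ρ^(m+1) * jacobiP p α ((m+1:ℕ):ℝ) (2*ρ^2-1)
    = ((((m+1:ℕ):ℝ)+2*(p:ℝ)-1+α+1)/(((m+1:ℕ):ℝ)+2*(p:ℝ)-1+1)) * ρ *
        (cc α (p+m) * ρ^m * jacobiP p α ((m:ℕ):ℝ) (2*ρ^2-1)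
          + cc α (p+m+1) * ρ^(m+2) * jacobiP (p-1) α ((m+2:ℕ):ℝ) (2*ρ^2-1))
      - ((((m+1:ℕ):ℝ)+2*(p:ℝ)-1+2*α+1)/(((m+1:ℕ):ℝ)+2*(p:ℝ)-1+1)) *
          (cc α (p+m) * ρ^(m+1) * jacobiP (p-1) α ((m+1:ℕ):ℝ) (2*ρ^2-1)) := by
  have h := master α (ρ^2) p (m+1) hp
  rw [show p+(m+1)-1 = p+m by omega] at h
  rw [show p+(m+1) = p+m+1 by omega] at h
  simp only [show (p:ℝ)+((m+1:ℕ):ℝ)-1 = (p:ℝ)+((m:ℕ):ℝ) from by push_cast; ring] at h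
  rw [show (((m+1:ℕ):ℝ))+2*(p:ℝ)-1+α+1 = ((m+1:ℕ):ℝ)+2*(p:ℝ)+α by ring,
    show (((m+1:ℕ):ℝ))+2*(p:ℝ)-1+2*α+1 = ((m+1:ℕ):ℝ)+2*(p:ℝ)+2*α by ring,
    show (((m+1:ℕ):ℝ))+2*(p:ℝ)-1+1 = ((m+1:ℕ):ℝ)+2*(p:ℝ) by ring]
  rw [jacobiP_eval p α (((m+1:ℕ)):ℝ) (ρ^2), jacobiP_eval p α ((m:ℕ):ℝ) (ρ^2),
    jacobiP_eval (p-1) α (((m+2:ℕ)):ℝ) (ρ^2), jacobiP_eval (p-1) α (((m+1:ℕ)):ℝ) (ρ^2)]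
  have hc : ((p-1:ℕ):ℝ) = (p:ℝ)-1 := by rw [Nat.cast_sub hp, Nat.cast_one]
  simp only [hc]
  simp only [show (p:ℝ)-1+α = (p:ℝ)+α-1 from by ring]
  simp only [show (p:ℝ)-1+((m+2:ℕ):ℝ) = (p:ℝ)+((m+1:ℕ):ℝ) from by push_cast; ring]
  simp only [show (p:ℝ)-1+((m+1:ℕ):ℝ) = (p:ℝ)+((m:ℕ):ℝ) from by push_cast; ring]
  rw [show p-1+1 = p by omega]
  linear_combination (ρ^(m+1)) * h

lemma main0J (α ρ : ℝ) (p : ℕ) (hp : 1 ≤ p) :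
    cc α p * jacobiP p α ((0:ℕ):ℝ) (2*ρ^2-1)
    = ((2*(p:ℝ)+α)/(2*(p:ℝ))) * ρ *
        (2 * (cc α p * ρ * jacobiP (p-1) α ((1:ℕ):ℝ) (2*ρ^2-1)))
      - ((2*(p:ℝ)+2*α)/(2*(p:ℝ))) * (cc α (p-1) * jacobiP (p-1) α ((0:ℕ):ℝ) (2*ρ^2-1)) := by
  have h := master α (ρ^2) p 0 hp
  simp only [Nat.cast_zero, Nat.add_zero, add_zero, zero_add] at h
  have h10 := eq10 α (ρ^2) p hp
  rw [jacobiP_eval p α ((0:ℕ):ℝ) (ρ^2), jacobiP_eval (p-1) α ((1:ℕ):ℝ) (ρ^2),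
    jacobiP_eval (p-1) α ((0:ℕ):ℝ) (ρ^2)]
  have hc : ((p-1:ℕ):ℝ) = (p:ℝ)-1 := by rw [Nat.cast_sub hp, Nat.cast_one]
  simp only [hc, Nat.cast_zero, Nat.cast_one, add_zero]
  simp only [show (p:ℝ)-1+α = (p:ℝ)+α-1 from by ring]
  simp only [show (p:ℝ)-1+1 = (p:ℝ) from by ring]
  rw [show p-1+1 = p by omega]
  linear_combination h + ((2*(p:ℝ)+α)/(2*(p:ℝ))) * h10

lemma Jfun_eval (α ρ : ℝ) (m p : ℕ) :
    Jfun α ((m + 2*p : ℕ) : ℤ) m ρ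
      = cc α (p+m) * ρ^m * jacobiP p α (m:ℝ) (2*ρ^2-1) := by
  unfold Jfun cc
  rw [if_neg (by push_cast; omega)]
  have h2 : ((((m+2*p:ℕ):ℤ) - (m:ℤ))/2) = (p:ℤ) := by push_cast; omega
  rw [h2]
  simp

lemma Jfun_zero (α ρ : ℝ) {n : ℤ} {m : ℕ} (h : n < (m:ℤ)) : Jfun α n m ρ = 0 := by
  unfold Jfun
  rw [if_pos h]

lemma main (α : ℝ) (n m : ℕ) (hle : m ≤ n + 1) (hpar : Even (n + 1 - m)) (ρ : ℝ) :
    Jfun α ((n : ℤ) + 1) m ρ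
      = ((n : ℝ) + α + 1) / ((n : ℝ) + 1) * ρ *
          (Jfun α (n : ℤ) ((m : ℤ) - 1).natAbs ρ + Jfun α (n : ℤ) (m + 1) ρ)
        - ((n : ℝ) + 2 * α + 1) / ((n : ℝ) + 1) * Jfun α ((n : ℤ) - 1) m ρ := by
  obtain ⟨p, hp⟩ : ∃ p, n + 1 = m + 2*p := by
    obtain ⟨r, hr⟩ := hpar; exact ⟨r, by omega⟩
  rcases Nat.eq_zero_or_pos p with rfl | hp1
  · -- p = 0, m = n+1
    obtain ⟨m', rfl⟩ : ∃ m', m = m'+1 := ⟨n, by omega⟩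
    have hn : n = m' := by omega
    subst hn
    have e1 : Jfun α ((n:ℤ)+1) (n+1) ρ
        = cc α (0+(n+1)) * ρ^(n+1) * jacobiP 0 α ((n+1:ℕ):ℝ) (2*ρ^2-1) := by
      rw [show ((n:ℤ)+1) = (((n+1)+2*0 : ℕ):ℤ) by push_cast; ring]
      exact Jfun_eval α ρ (n+1) 0
    have e2 : Jfun α (n:ℤ) (((n+1:ℕ):ℤ)-1).natAbs ρ
        = cc α (0+n) * ρ^n * jacobiP 0 α ((n:ℕ):ℝ) (2*ρ^2-1) := by
      rw [show ((((n+1:ℕ)):ℤ)-1).natAbs = n by omega]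
      rw [show (n:ℤ) = ((n+2*0 : ℕ):ℤ) by push_cast; ring]
      exact Jfun_eval α ρ n 0
    have e3 : Jfun α (n:ℤ) (n+1+1) ρ = 0 := Jfun_zero α ρ (by push_cast; omega)
    have e4 : Jfun α ((n:ℤ)-1) (n+1) ρ = 0 := Jfun_zero α ρ (by push_cast; omega)
    rw [e1, e2, e3, e4, jacobiP_zero_deg, jacobiP_zero_deg]
    simp only [Nat.zero_add]
    have hne : ((n:ℝ)+1) ≠ 0 := by positivity
    have h5 : cc α (n+1) = (α+1+(n:ℝ)) * cc α n / ((n:ℝ)+1) := by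
      rw [eq_div_iff hne]; linear_combination cc_succ α n
    rw [h5]
    field_simp
    ring
  · rcases Nat.eq_zero_or_pos m with rfl | hm1
    · -- m = 0
      have e1 : Jfun α ((n:ℤ)+1) 0 ρ
          = cc α (p+0) * ρ^0 * jacobiP p α ((0:ℕ):ℝ) (2*ρ^2-1) := by
        rw [show ((n:ℤ)+1) = ((0+2*p : ℕ):ℤ) by push_cast; omega]
        exact Jfun_eval α ρ 0 p
      have e2 : Jfun α (n:ℤ) (((0:ℕ):ℤ)-1).natAbs ρ
          = cc α ((p-1)+1) * ρ^1 * jacobiP (p-1) α ((1:ℕ):ℝ) (2*ρ^2-1) := by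
        rw [show ((((0:ℕ)):ℤ)-1).natAbs = 1 by simp]
        rw [show (n:ℤ) = ((1+2*(p-1) : ℕ):ℤ) by push_cast; omega]
        exact Jfun_eval α ρ 1 (p-1)
      have e3 : Jfun α (n:ℤ) (0+1) ρ
          = cc α ((p-1)+1) * ρ^1 * jacobiP (p-1) α ((1:ℕ):ℝ) (2*ρ^2-1) := by
        rw [show (n:ℤ) = ((1+2*(p-1) : ℕ):ℤ) by push_cast; omega]
        exact Jfun_eval α ρ 1 (p-1)
      have e4 : Jfun α ((n:ℤ)-1) 0 ρ
          = cc α ((p-1)+0) * ρ^0 * jacobiP (p-1) α ((0:ℕ):ℝ) (2*ρ^2-1) := by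
        rw [show ((n:ℤ)-1) = ((0+2*(p-1) : ℕ):ℤ) by push_cast; omega]
        exact Jfun_eval α ρ 0 (p-1)
      rw [e1, e2, e3, e4]
      have hn' : (n:ℝ) = 2*(p:ℝ)-1 := by
        have h : (n:ℤ) = 2*(p:ℤ)-1 := by omega
        exact_mod_cast congrArg (Int.cast : ℤ → ℝ) h
      rw [hn']
      rw [show 2*(p:ℝ)-1+α+1 = 2*(p:ℝ)+α by ring,
        show 2*(p:ℝ)-1+2*α+1 = 2*(p:ℝ)+2*α by ring,
        show 2*(p:ℝ)-1+1 = 2*(p:ℝ) by ring]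
      rw [show (p-1)+1 = p by omega]
      simp only [Nat.add_zero]
      linear_combination main0J α ρ p hp1
    · -- m ≥ 1
      obtain ⟨m', rfl⟩ : ∃ m', m = m'+1 := ⟨m-1, by omega⟩
      have hn : n = m' + 2*p := by omega
      subst hn
      have e1 : Jfun α (((m'+2*p:ℕ):ℤ)+1) (m'+1) ρ
          = cc α (p+(m'+1)) * ρ^(m'+1) * jacobiP p α ((m'+1:ℕ):ℝ) (2*ρ^2-1) := by
        rw [show (((m'+2*p:ℕ):ℤ)+1) = (((m'+1)+2*p : ℕ):ℤ) by push_cast; ring]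
        exact Jfun_eval α ρ (m'+1) p
      have e2 : Jfun α ((m'+2*p:ℕ):ℤ) (((m'+1:ℕ):ℤ)-1).natAbs ρ
          = cc α (p+m') * ρ^m' * jacobiP p α ((m':ℕ):ℝ) (2*ρ^2-1) := by
        rw [show ((((m'+1:ℕ)):ℤ)-1).natAbs = m' by omega]
        exact Jfun_eval α ρ m' p
      have e3 : Jfun α ((m'+2*p:ℕ):ℤ) (m'+1+1) ρ
          = cc α ((p-1)+(m'+2)) * ρ^(m'+2) * jacobiP (p-1) α ((m'+2:ℕ):ℝ) (2*ρ^2-1) := by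
        rw [show (m'+1+1) = (m'+2) by omega]
        rw [show ((m'+2*p:ℕ):ℤ) = (((m'+2)+2*(p-1) : ℕ):ℤ) by push_cast; omega]
        exact Jfun_eval α ρ (m'+2) (p-1)
      have e4 : Jfun α (((m'+2*p:ℕ):ℤ)-1) (m'+1) ρ
          = cc α ((p-1)+(m'+1)) * ρ^(m'+1) * jacobiP (p-1) α ((m'+1:ℕ):ℝ) (2*ρ^2-1) := by
        rw [show (((m'+2*p:ℕ):ℤ)-1) = (((m'+1)+2*(p-1) : ℕ):ℤ) by push_cast; omega]
        exact Jfun_eval α ρ (m'+1) (p-1)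
      rw [e1, e2, e3, e4]
      rw [show ((m'+2*p:ℕ):ℝ) = ((m'+1:ℕ):ℝ)+2*(p:ℝ)-1 by push_cast; ring]
      rw [show p+(m'+1) = p+m'+1 by omega, show (p-1)+(m'+2) = p+m'+1 by omega,
        show (p-1)+(m'+1) = p+m' by omega]
      linear_combination mainJ α ρ p m' hp1

end S13

/-- the recursion
`J_{n+1,m}^α = ((n+α+1)/(n+1)) ρ [J_{n,|m−1|}^α + J_{n,m+1}^α] − ((n+2α+1)/(n+1)) J_{n−1,m}^α`
for `n + 1 − m` even and nonnegative; in particular, for `α = 0` it reduces to the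
Shakibaei–Paramesran recursion for the radial parts `²R_n^{m,0} = J_{nm}^0` of the standard
2D Zernike circle polynomials. -/
theorem stmt13 (α : ℝ) (hα : -1 < α) (n m : ℕ) (hle : m ≤ n + 1) (hpar : Even (n + 1 - m))
    (ρ : ℝ) (hρ : ρ ∈ Set.Icc (0:ℝ) 1) :
    (Jfun α ((n : ℤ) + 1) m ρ
      = ((n : ℝ) + α + 1) / ((n : ℝ) + 1) * ρ *
          (Jfun α (n : ℤ) ((m : ℤ) - 1).natAbs ρ + Jfun α (n : ℤ) (m + 1) ρ)
        - ((n : ℝ) + 2 * α + 1) / ((n : ℝ) + 1) * Jfun α ((n : ℤ) - 1) m ρ)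
    ∧ (Jfun 0 ((n : ℤ) + 1) m ρ
      = ρ * (Jfun 0 (n : ℤ) ((m : ℤ) - 1).natAbs ρ + Jfun 0 (n : ℤ) (m + 1) ρ)
        - Jfun 0 ((n : ℤ) - 1) m ρ) := by
  refine ⟨S13.main α n m hle hpar ρ, ?_⟩
  have h := S13.main 0 n m hle hpar ρ
  have hne : ((n:ℝ)+1) ≠ 0 := by positivity
  rw [show ((n:ℝ)+0+1) = (n:ℝ)+1 by ring, show ((n:ℝ)+2*0+1) = (n:ℝ)+1 by ring,
    div_self hne, one_mul, one_mul] at h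
  exact h
end

section
/- Let α > −1 be real and l, p integers ≥ 0. Then ²R_{l+2+2p}^{l+2,α}(ρ) = Σ_{s=0}^{p+1} ²C_{ps}^{l+2→l,α} ²R_{l+2s}^{l,α}(ρ) for all 0 ≤ ρ ≤ 1, where for s = 0, 1, …, p, ²C_{ps}^{l+2→l,α} = (−1)^{p−s} (l+1) · (α+1)_p (α+l+1)_s / [ (α+l+2)_{p+1} (α+1)_s ] · (α+l+2s+1)/(α+l+1), and ²C_{p,p+1}^{l+2→l,α} = (p+1)/(α+l+p+2). -/
open Real MeasureTheory

noncomputable def gnum (x : ℝ) (k : ℕ) : ℝ := ∏ i ∈ Finset.range k, (x - i)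

lemma genBinom_eq (x : ℝ) (k : ℕ) : genBinom x k = gnum x k / (Nat.factorial k : ℝ) := rfl

lemma gnum_zero (x : ℝ) : gnum x 0 = 1 := rfl

lemma genBinom_zero (x : ℝ) : genBinom x 0 = 1 := by simp [genBinom]

lemma gnum_succ (x : ℝ) (k : ℕ) : gnum x (k+1) = gnum x k * (x - k) :=
  Finset.prod_range_succ _ _

lemma gnum_shift (x : ℝ) (k : ℕ) : gnum (x+1) (k+1) = (x+1) * gnum x k := by
  unfold gnum
  rw [Finset.prod_range_succ']
  simp only [Nat.cast_zero, sub_zero]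
  rw [mul_comm]
  congr 1
  apply Finset.prod_congr rfl
  intro i _
  push_cast
  ring

lemma genBinom_succ (x : ℝ) (k : ℕ) :
    genBinom x (k+1) = genBinom x k * (x - k) / ((k:ℝ)+1) := by
  rw [genBinom_eq, genBinom_eq, gnum_succ, Nat.factorial_succ]
  have h1 : ((Nat.factorial k : ℕ) : ℝ) ≠ 0 := Nat.cast_ne_zero.mpr (Nat.factorial_ne_zero k)
  have h2 : ((k:ℝ)+1) ≠ 0 := by positivity
  push_cast
  field_simp

lemma genBinom_shift (x : ℝ) (k : ℕ) :
    genBinom (x+1) (k+1) = (x+1) * genBinom x k / ((k:ℝ)+1) := by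
  rw [genBinom_eq, genBinom_eq, gnum_shift, Nat.factorial_succ]
  have h1 : ((Nat.factorial k : ℕ) : ℝ) ≠ 0 := Nat.cast_ne_zero.mpr (Nat.factorial_ne_zero k)
  have h2 : ((k:ℝ)+1) ≠ 0 := by positivity
  push_cast
  field_simp

lemma jacobiP_v (k : ℕ) (a b v : ℝ) :
    jacobiP k a b (2*v - 1) = ∑ j ∈ Finset.range (k+1),
      genBinom ((k:ℝ)+a) (k-j) * genBinom ((k:ℝ)+b) j * (v-1)^j * v^(k-j) := by
  unfold jacobiP
  apply Finset.sum_congr rfl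
  intro j _
  have h1 : (2*v - 1 - 1)/2 = v - 1 := by ring
  have h2 : (2*v - 1 + 1)/2 = v := by ring
  rw [h1, h2]

lemma sum_guard (n : ℕ) (f : ℕ → ℝ) :
    ∑ j ∈ Finset.range (n+1), f j
      = ∑ j ∈ Finset.range (n+2), (if j ≤ n then f j else 0) := by
  rw [Finset.sum_range_succ (fun j => if j ≤ n then f j else 0) (n+1),
    if_neg (by omega), add_zero]
  exact Finset.sum_congr rfl fun j hj =>
    (if_pos (Nat.lt_succ_iff.mp (Finset.mem_range.mp hj))).symm

lemma sum_shift (n : ℕ) (g : ℕ → ℝ) :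
    ∑ j ∈ Finset.range (n+1), g j
      = ∑ j ∈ Finset.range (n+2), (if 1 ≤ j then g (j-1) else 0) := by
  rw [Finset.sum_range_succ' (fun j => if 1 ≤ j then g (j-1) else 0) (n+1)]
  simp

lemma pochN_succ (x : ℝ) (k : ℕ) : pochN x (k+1) = pochN x k * (x + k) :=
  Finset.prod_range_succ _ _

lemma pochN_zero (x : ℝ) : pochN x 0 = 1 := rfl

lemma pochN_one (x : ℝ) : pochN x 1 = x := by simp [pochN]

lemma pochN_add (x : ℝ) (m k : ℕ) : pochN x (m+k) = pochN x m * pochN (x+m) k := by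
  induction k with
  | zero => simp [pochN]
  | succ k ih =>
    rw [show m + (k+1) = (m+k)+1 from by omega, pochN_succ, ih, pochN_succ]
    push_cast; ring

lemma pochN_pos {x : ℝ} (hx : 0 < x) (k : ℕ) : 0 < pochN x k :=
  Finset.prod_pos fun i _ => by positivity

lemma keyL1_mid (a b v : ℝ) (i m : ℕ) :
    (2*((i:ℝ)+1+(m:ℝ))+a+b+2) *
        (v * (genBinom ((i:ℝ)+1+(m:ℝ)+a) m * genBinom ((i:ℝ)+1+(m:ℝ)+(b+1)) (i+1)
          * (v-1)^(i+1) * v^m))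
      = ((i:ℝ)+1+(m:ℝ)+b+1) * (genBinom ((i:ℝ)+1+(m:ℝ)+a) m * genBinom ((i:ℝ)+1+(m:ℝ)+b) (i+1)
          * (v-1)^(i+1) * v^m * v)
        - ((i:ℝ)+1+(m:ℝ)+b+1) * (genBinom ((i:ℝ)+1+(m:ℝ)+a) (m+1) * genBinom ((i:ℝ)+1+(m:ℝ)+b) i
          * (v-1)^i * v^(m+1) * (v-1))
        + ((i:ℝ)+1+(m:ℝ)+1) * (genBinom ((i:ℝ)+1+(m:ℝ)+1+a) (m+1) * genBinom ((i:ℝ)+1+(m:ℝ)+1+b) (i+1)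
          * (v-1)^(i+1) * v^(m+1)) := by
  rw [show (i:ℝ)+1+(m:ℝ)+(b+1) = ((i:ℝ)+1+(m:ℝ)+b)+1 from by ring,
      show (i:ℝ)+1+(m:ℝ)+1+a = ((i:ℝ)+1+(m:ℝ)+a)+1 from by ring,
      show (i:ℝ)+1+(m:ℝ)+1+b = ((i:ℝ)+1+(m:ℝ)+b)+1 from by ring]
  rw [genBinom_shift, genBinom_shift, genBinom_succ, genBinom_succ]
  simp only [pow_succ]
  have hm1 : ((m:ℝ)+1) ≠ 0 := by positivity
  have hi1 : ((i:ℝ)+1) ≠ 0 := by positivity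
  generalize gnum ((i:ℝ)+1+(m:ℝ)+a) m = P
  generalize gnum ((i:ℝ)+1+(m:ℝ)+b) i = Q
  field_simp
  ring

lemma keyL1_zero (a b v : ℝ) (n : ℕ) :
    (2*(n:ℝ)+a+b+2) * (v * (genBinom ((n:ℝ)+a) n * genBinom ((n:ℝ)+(b+1)) 0 * (v-1)^0 * v^n))
      = ((n:ℝ)+b+1) * (genBinom ((n:ℝ)+a) n * genBinom ((n:ℝ)+b) 0 * (v-1)^0 * v^n * v)
        - 0
        + ((n:ℝ)+1) * (genBinom ((n:ℝ)+1+a) (n+1) * genBinom ((n:ℝ)+1+b) 0 * (v-1)^0 * v^(n+1)) := by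
  rw [show (n:ℝ)+1+a = ((n:ℝ)+a)+1 from by ring, genBinom_shift]
  simp only [genBinom_zero, pow_zero, pow_succ]
  have h : ((n:ℝ)+1) ≠ 0 := by positivity
  field_simp
  ring

lemma keyL1_top (a b v : ℝ) (n : ℕ) :
    (0:ℝ) = 0 - ((n:ℝ)+b+1) * (genBinom ((n:ℝ)+a) 0 * genBinom ((n:ℝ)+b) n * (v-1)^n * v^0 * (v-1))
        + ((n:ℝ)+1) * (genBinom ((n:ℝ)+1+a) 0 * genBinom ((n:ℝ)+1+b) (n+1) * (v-1)^(n+1) * v^0) := by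
  rw [show (n:ℝ)+1+b = ((n:ℝ)+b)+1 from by ring, genBinom_shift]
  simp only [genBinom_zero, pow_zero, pow_succ]
  have h : ((n:ℝ)+1) ≠ 0 := by positivity
  field_simp
  ring

set_option maxHeartbeats 800000 in
lemma L1 (a b : ℝ) (n : ℕ) (v : ℝ) :
    (2*(n:ℝ)+a+b+2) * (v * jacobiP n a (b+1) (2*v-1))
      = ((n:ℝ)+b+1) * jacobiP n a b (2*v-1)
        + ((n:ℝ)+1) * jacobiP (n+1) a b (2*v-1) := by
  have hR1 : ((n:ℝ)+b+1) * jacobiP n a b (2*v-1)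
      = (∑ j ∈ Finset.range (n+1), ((n:ℝ)+b+1) *
          (genBinom ((n:ℝ)+a) (n-j) * genBinom ((n:ℝ)+b) j * (v-1)^j * v^(n-j) * v))
        - ∑ j ∈ Finset.range (n+1), ((n:ℝ)+b+1) *
          (genBinom ((n:ℝ)+a) (n-j) * genBinom ((n:ℝ)+b) j * (v-1)^j * v^(n-j) * (v-1)) := by
    rw [jacobiP_v, Finset.mul_sum, ← Finset.sum_sub_distrib]
    exact Finset.sum_congr rfl fun j _ => by ring
  rw [hR1, jacobiP_v, jacobiP_v]
  simp only [Finset.mul_sum]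
  rw [sum_guard n (fun j => (2*(n:ℝ)+a+b+2) *
        (v * (genBinom ((n:ℝ)+a) (n-j) * genBinom ((n:ℝ)+(b+1)) j * (v-1)^j * v^(n-j))))]
  rw [sum_guard n (fun j => ((n:ℝ)+b+1) *
        (genBinom ((n:ℝ)+a) (n-j) * genBinom ((n:ℝ)+b) j * (v-1)^j * v^(n-j) * v))]
  rw [sum_shift n (fun j => ((n:ℝ)+b+1) *
        (genBinom ((n:ℝ)+a) (n-j) * genBinom ((n:ℝ)+b) j * (v-1)^j * v^(n-j) * (v-1)))]
  rw [show n+1+1 = n+2 from rfl, ← Finset.sum_sub_distrib, ← Finset.sum_add_distrib]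
  apply Finset.sum_congr rfl
  intro j hj
  have hj2 : j < n + 2 := Finset.mem_range.mp hj
  by_cases h1 : 1 ≤ j
  · by_cases h : j ≤ n
    · rw [if_pos h, if_pos h, if_pos h1]
      obtain ⟨i, rfl⟩ : ∃ i, j = i+1 := ⟨j-1, by omega⟩
      obtain ⟨m, rfl⟩ : ∃ m, n = i+1+m := ⟨n-(i+1), by omega⟩
      simp only [Nat.add_sub_cancel,
        show i+1+m - (i+1) = m from by omega,
        show i+1+m - i = m+1 from by omega,
        show i+1+m+1 - (i+1) = m+1 from by omega]
      rw [show ((i+1+m+1:ℕ):ℝ) = (i:ℝ)+1+(m:ℝ)+1 from by push_cast; ring,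
          show ((i+1+m:ℕ):ℝ) = (i:ℝ)+1+(m:ℝ) from by push_cast; ring]
      exact keyL1_mid a b v i m
    · have hj' : j = n+1 := by omega
      subst hj'
      rw [if_neg h, if_neg h, if_pos h1]
      simp only [Nat.add_sub_cancel, Nat.sub_self]
      rw [show ((n+1:ℕ):ℝ) = (n:ℝ)+1 from by push_cast; ring]
      exact keyL1_top a b v n
  · have hj0 : j = 0 := by omega
    subst hj0
    rw [if_pos (by omega : 0 ≤ n), if_pos (by omega : 0 ≤ n), if_neg h1]
    simp only [Nat.sub_zero]
    rw [show ((n+1:ℕ):ℝ) = (n:ℝ)+1 from by push_cast; ring]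
    exact keyL1_zero a b v n

lemma keyL2_mid (a b v : ℝ) (i m : ℕ) :
    (2*((i:ℝ)+1+(m:ℝ))+a+b+3) *
        (genBinom ((i:ℝ)+1+(m:ℝ)+1+a) (m+1) * genBinom ((i:ℝ)+1+(m:ℝ)+1+b) (i+1)
          * (v-1)^(i+1) * v^(m+1))
      = ((i:ℝ)+1+(m:ℝ)+a+b+2) *
          (genBinom ((i:ℝ)+1+(m:ℝ)+1+a) (m+1) * genBinom ((i:ℝ)+1+(m:ℝ)+1+(b+1)) (i+1)
            * (v-1)^(i+1) * v^(m+1))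
        + (((i:ℝ)+1+(m:ℝ)+1+a) * (genBinom ((i:ℝ)+1+(m:ℝ)+a) m * genBinom ((i:ℝ)+1+(m:ℝ)+(b+1)) (i+1)
            * (v-1)^(i+1) * v^m * v)
          - ((i:ℝ)+1+(m:ℝ)+1+a) * (genBinom ((i:ℝ)+1+(m:ℝ)+a) (m+1) * genBinom ((i:ℝ)+1+(m:ℝ)+(b+1)) i
            * (v-1)^i * v^(m+1) * (v-1))) := by
  rw [show (i:ℝ)+1+(m:ℝ)+1+b = ((i:ℝ)+1+(m:ℝ)+(b+1)) from by ring,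
      show (i:ℝ)+1+(m:ℝ)+1+(b+1) = ((i:ℝ)+1+(m:ℝ)+(b+1))+1 from by ring,
      show (i:ℝ)+1+(m:ℝ)+1+a = ((i:ℝ)+1+(m:ℝ)+a)+1 from by ring]
  rw [genBinom_shift, genBinom_shift, genBinom_succ, genBinom_succ]
  simp only [pow_succ]
  have hm1 : ((m:ℝ)+1) ≠ 0 := by positivity
  have hi1 : ((i:ℝ)+1) ≠ 0 := by positivity
  generalize gnum ((i:ℝ)+1+(m:ℝ)+a) m = P
  generalize gnum ((i:ℝ)+1+(m:ℝ)+(b+1)) i = Q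
  field_simp
  ring

lemma keyL2_zero (a b v : ℝ) (n : ℕ) :
    (2*(n:ℝ)+a+b+3) *
        (genBinom ((n:ℝ)+1+a) (n+1) * genBinom ((n:ℝ)+1+b) 0 * (v-1)^0 * v^(n+1))
      = ((n:ℝ)+a+b+2) *
          (genBinom ((n:ℝ)+1+a) (n+1) * genBinom ((n:ℝ)+1+(b+1)) 0 * (v-1)^0 * v^(n+1))
        + (((n:ℝ)+1+a) * (genBinom ((n:ℝ)+a) n * genBinom ((n:ℝ)+(b+1)) 0 * (v-1)^0 * v^n * v)
          - 0) := by
  rw [show (n:ℝ)+1+a = ((n:ℝ)+a)+1 from by ring, genBinom_shift]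
  simp only [genBinom_zero, pow_zero, pow_succ]
  have h : ((n:ℝ)+1) ≠ 0 := by positivity
  field_simp
  ring

lemma keyL2_top (a b v : ℝ) (n : ℕ) :
    (2*(n:ℝ)+a+b+3) *
        (genBinom ((n:ℝ)+1+a) 0 * genBinom ((n:ℝ)+1+b) (n+1) * (v-1)^(n+1) * v^0)
      = ((n:ℝ)+a+b+2) *
          (genBinom ((n:ℝ)+1+a) 0 * genBinom ((n:ℝ)+1+(b+1)) (n+1) * (v-1)^(n+1) * v^0)
        + (0 - ((n:ℝ)+1+a) * (genBinom ((n:ℝ)+a) 0 * genBinom ((n:ℝ)+(b+1)) n * (v-1)^n * v^0 * (v-1))) := by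
  rw [show (n:ℝ)+1+b = ((n:ℝ)+(b+1)) from by ring,
      show (n:ℝ)+1+(b+1) = ((n:ℝ)+(b+1))+1 from by ring]
  rw [genBinom_shift, genBinom_succ]
  simp only [genBinom_zero, pow_zero, pow_succ]
  have h : ((n:ℝ)+1) ≠ 0 := by positivity
  field_simp
  ring

set_option maxHeartbeats 800000 in
lemma L2 (a b : ℝ) (n : ℕ) (v : ℝ) :
    (2*(n:ℝ)+a+b+3) * jacobiP (n+1) a b (2*v-1)
      = ((n:ℝ)+a+b+2) * jacobiP (n+1) a (b+1) (2*v-1)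
        + ((n:ℝ)+1+a) * jacobiP n a (b+1) (2*v-1) := by
  have hR2 : ((n:ℝ)+1+a) * jacobiP n a (b+1) (2*v-1)
      = (∑ j ∈ Finset.range (n+1), ((n:ℝ)+1+a) *
          (genBinom ((n:ℝ)+a) (n-j) * genBinom ((n:ℝ)+(b+1)) j * (v-1)^j * v^(n-j) * v))
        - ∑ j ∈ Finset.range (n+1), ((n:ℝ)+1+a) *
          (genBinom ((n:ℝ)+a) (n-j) * genBinom ((n:ℝ)+(b+1)) j * (v-1)^j * v^(n-j) * (v-1)) := by
    rw [jacobiP_v, Finset.mul_sum, ← Finset.sum_sub_distrib]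
    exact Finset.sum_congr rfl fun j _ => by ring
  rw [hR2, jacobiP_v, jacobiP_v]
  simp only [Finset.mul_sum]
  rw [sum_guard n (fun j => ((n:ℝ)+1+a) *
        (genBinom ((n:ℝ)+a) (n-j) * genBinom ((n:ℝ)+(b+1)) j * (v-1)^j * v^(n-j) * v))]
  rw [sum_shift n (fun j => ((n:ℝ)+1+a) *
        (genBinom ((n:ℝ)+a) (n-j) * genBinom ((n:ℝ)+(b+1)) j * (v-1)^j * v^(n-j) * (v-1)))]
  rw [show n+1+1 = n+2 from rfl, ← Finset.sum_sub_distrib, ← Finset.sum_add_distrib]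
  apply Finset.sum_congr rfl
  intro j hj
  have hj2 : j < n + 2 := Finset.mem_range.mp hj
  by_cases h1 : 1 ≤ j
  · by_cases h : j ≤ n
    · rw [if_pos h, if_pos h1]
      obtain ⟨i, rfl⟩ : ∃ i, j = i+1 := ⟨j-1, by omega⟩
      obtain ⟨m, rfl⟩ : ∃ m, n = i+1+m := ⟨n-(i+1), by omega⟩
      simp only [Nat.add_sub_cancel,
        show i+1+m - (i+1) = m from by omega,
        show i+1+m - i = m+1 from by omega,
        show i+1+m+1 - (i+1) = m+1 from by omega]
      rw [show ((i+1+m+1:ℕ):ℝ) = (i:ℝ)+1+(m:ℝ)+1 from by push_cast; ring,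
          show ((i+1+m:ℕ):ℝ) = (i:ℝ)+1+(m:ℝ) from by push_cast; ring]
      exact keyL2_mid a b v i m
    · have hj' : j = n+1 := by omega
      subst hj'
      rw [if_neg h, if_pos h1]
      simp only [Nat.add_sub_cancel, Nat.sub_self]
      rw [show ((n+1:ℕ):ℝ) = (n:ℝ)+1 from by push_cast; ring]
      exact keyL2_top a b v n
  · have hj0 : j = 0 := by omega
    subst hj0
    rw [if_pos (by omega : 0 ≤ n), if_neg h1]
    simp only [Nat.sub_zero]
    rw [show ((n+1:ℕ):ℝ) = (n:ℝ)+1 from by push_cast; ring]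
    exact keyL2_zero a b v n

set_option maxHeartbeats 1600000 in
lemma conn (α : ℝ) (hα : -1 < α) (l n : ℕ) (v : ℝ) :
    jacobiP n α ((l:ℝ)+1) (2*v-1)
      = ∑ s ∈ Finset.range (n+1),
          ((-1:ℝ)^(n-s) * (α+(l:ℝ)+2*(s:ℝ)+1) * pochN (α+(s:ℝ)+1) (n-s)
            / pochN (α+(l:ℝ)+(s:ℝ)+1) (n-s+1))
          * jacobiP s α (l:ℝ) (2*v-1) := by
  have hl0 : (0:ℝ) ≤ (l:ℝ) := Nat.cast_nonneg l
  induction n with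
  | zero =>
      rw [Finset.sum_range_one]
      have h1 : jacobiP 0 α ((l:ℝ)+1) (2*v-1) = 1 := by simp [jacobiP, genBinom]
      have h2 : jacobiP 0 α (l:ℝ) (2*v-1) = 1 := by simp [jacobiP, genBinom]
      rw [h1, h2]
      norm_num [pochN_zero, pochN_one]
      rw [div_self (by linarith : α+(l:ℝ)+1 ≠ 0)]
  | succ n ih =>
      have h0n : (0:ℝ) ≤ (n:ℝ) := Nat.cast_nonneg n
      have hC : ((n:ℝ)+α+(l:ℝ)+2) ≠ 0 := by linarith
      have hL2 := L2 α (l:ℝ) n v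
      rw [Finset.sum_range_succ]
      have hmain : ∀ s ∈ Finset.range (n+1),
          ((-1:ℝ)^(n+1-s) * (α+(l:ℝ)+2*(s:ℝ)+1) * pochN (α+(s:ℝ)+1) (n+1-s)
            / pochN (α+(l:ℝ)+(s:ℝ)+1) (n+1-s+1)) * jacobiP s α (l:ℝ) (2*v-1)
          = (-((n:ℝ)+1+α)/((n:ℝ)+α+(l:ℝ)+2)) *
              (((-1:ℝ)^(n-s) * (α+(l:ℝ)+2*(s:ℝ)+1) * pochN (α+(s:ℝ)+1) (n-s)
                / pochN (α+(l:ℝ)+(s:ℝ)+1) (n-s+1)) * jacobiP s α (l:ℝ) (2*v-1)) := by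
        intro s hs
        have hs' : s ≤ n := Nat.lt_succ_iff.mp (Finset.mem_range.mp hs)
        have hs0 : (0:ℝ) ≤ (s:ℝ) := Nat.cast_nonneg s
        rw [show n+1-s = (n-s)+1 from by omega]
        rw [pochN_succ, pochN_succ, pochN_succ, pow_succ]
        have hcast : ((n-s:ℕ):ℝ) = (n:ℝ)-(s:ℝ) := by
          rw [Nat.cast_sub hs']
        rw [hcast]
        have hb : (0:ℝ) < pochN (α+(l:ℝ)+(s:ℝ)+1) (n-s) :=
          pochN_pos (by linarith) _
        have hd1 : α+(l:ℝ)+(s:ℝ)+1+((n:ℝ)-(s:ℝ)) ≠ 0 := by nlinarith [hs0, h0n, hl0]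
        rw [show ((n-s+1:ℕ):ℝ) = (n:ℝ)-(s:ℝ)+1 from by push_cast [Nat.cast_sub hs']; ring]
        rw [show α+(s:ℝ)+1+((n:ℝ)-(s:ℝ)) = (n:ℝ)+1+α from by ring,
            show α+(l:ℝ)+(s:ℝ)+1+((n:ℝ)-(s:ℝ)+1) = (n:ℝ)+α+(l:ℝ)+2 from by ring,
            show α+(l:ℝ)+(s:ℝ)+1+((n:ℝ)-(s:ℝ)) = α+(l:ℝ)+(n:ℝ)+1 from by ring]
        have hY : α+(l:ℝ)+(n:ℝ)+1 ≠ 0 := by nlinarith [h0n, hl0]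
        have hbne : pochN (α+(l:ℝ)+(s:ℝ)+1) (n-s) ≠ 0 := ne_of_gt hb
        field_simp
      rw [Finset.sum_congr rfl hmain, ← Finset.mul_sum, ← ih]
      simp only [Nat.sub_self, pow_zero, pochN_zero, Nat.zero_add, pochN_one, one_mul, mul_one]
      have hd' : α+(l:ℝ)+((n+1:ℕ):ℝ)+1 ≠ 0 := by push_cast; linarith
      rw [div_mul_eq_mul_div, div_mul_eq_mul_div, div_add_div _ _ hC hd',
        eq_div_iff (mul_ne_zero hC hd')]
      push_cast
      linear_combination (-((n:ℝ)+α+(l:ℝ)+2)) * hL2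

lemma coeff_mid (α : ℝ) (hα : -1 < α) (l s k : ℕ) :
    ((s:ℝ)+(k:ℝ)+((l:ℝ)+1)+1) *
        ((-1:ℝ)^k * (α+(l:ℝ)+2*(s:ℝ)+1) * pochN (α+(s:ℝ)+1) k
          / pochN (α+(l:ℝ)+(s:ℝ)+1) (k+1))
      + ((s:ℝ)+(k:ℝ)+1) *
        ((-1:ℝ)^(k+1) * (α+(l:ℝ)+2*(s:ℝ)+1) * pochN (α+(s:ℝ)+1) (k+1)
          / pochN (α+(l:ℝ)+(s:ℝ)+1) (k+1+1))
      = (2*((s:ℝ)+(k:ℝ))+α+((l:ℝ)+1)+2) *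
          ((-1:ℝ)^k * ((l:ℝ)+1) * (pochN (α+1) (s+k) * pochN (α+(l:ℝ)+1) s)
            / (pochN (α+(l:ℝ)+2) (s+k+1) * pochN (α+1) s)
            * ((α+(l:ℝ)+2*(s:ℝ)+1)/(α+(l:ℝ)+1))) := by
  have hs0 : (0:ℝ) ≤ (s:ℝ) := Nat.cast_nonneg s
  have hk0 : (0:ℝ) ≤ (k:ℝ) := Nat.cast_nonneg k
  have hl0 : (0:ℝ) ≤ (l:ℝ) := Nat.cast_nonneg l
  have hA0 : (0:ℝ) < pochN (α+1) s := pochN_pos (by linarith) s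
  have hB0 : (0:ℝ) < pochN (α+(l:ℝ)+1) s := pochN_pos (by linarith) s
  have hB : (0:ℝ) < pochN (α+(l:ℝ)+(s:ℝ)+1) (k+1) := pochN_pos (by linarith) (k+1)
  have hl1 : (0:ℝ) < α+(l:ℝ)+1 := by linarith
  rw [pochN_succ (α+(s:ℝ)+1) k]
  rw [pochN_succ (α+(l:ℝ)+(s:ℝ)+1) (k+1)]
  rw [pochN_add (α+1) s k]
  rw [show α+1+(s:ℝ) = α+(s:ℝ)+1 from by ring]
  have e1 : pochN (α+(l:ℝ)+1) (s+k+2) = pochN (α+(l:ℝ)+1) s * pochN (α+(l:ℝ)+1+(s:ℝ)) (k+2) := by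
    have h := pochN_add (α+(l:ℝ)+1) s (k+2)
    rwa [show s+(k+2) = s+k+2 from by omega] at h
  have e2 : pochN (α+(l:ℝ)+1) (s+k+2) = (α+(l:ℝ)+1) * pochN (α+(l:ℝ)+2) (s+k+1) := by
    have h := pochN_add (α+(l:ℝ)+1) 1 (s+k+1)
    rw [show 1+(s+k+1) = s+k+2 from by omega, pochN_one,
        show α+(l:ℝ)+1+((1:ℕ):ℝ) = α+(l:ℝ)+2 from by push_cast; ring] at h
    exact h
  have e3 : pochN (α+(l:ℝ)+1+(s:ℝ)) (k+2) = pochN (α+(l:ℝ)+(s:ℝ)+1) (k+1) * (α+(l:ℝ)+(s:ℝ)+1+((k:ℝ)+1)) := by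
    rw [show α+(l:ℝ)+1+(s:ℝ) = α+(l:ℝ)+(s:ℝ)+1 from by ring,
        show k+2 = (k+1)+1 from rfl, pochN_succ,
        show ((k+1:ℕ):ℝ) = (k:ℝ)+1 from by push_cast; ring]
  have hq : pochN (α+(l:ℝ)+2) (s+k+1)
      = pochN (α+(l:ℝ)+1) s * (pochN (α+(l:ℝ)+(s:ℝ)+1) (k+1) * (α+(l:ℝ)+(s:ℝ)+1+((k:ℝ)+1)))
        / (α+(l:ℝ)+1) := by
    have h := e2
    rw [e1, e3] at h
    rw [eq_div_iff (ne_of_gt hl1)]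
    linarith [h]
  rw [hq]
  rw [show ((k+1:ℕ):ℝ) = (k:ℝ)+1 from by push_cast; ring]
  rw [pow_succ]
  have hT : α+(l:ℝ)+(s:ℝ)+1+((k:ℝ)+1) ≠ 0 := by nlinarith
  have hTk : α+(l:ℝ)+(s:ℝ)+1+(k:ℝ) ≠ 0 := by nlinarith
  field_simp
  ring

set_option maxHeartbeats 1600000 in
lemma key (α : ℝ) (hα : -1 < α) (l p : ℕ) (v : ℝ) :
    v * jacobiP p α ((l:ℝ)+1+1) (2*v-1)
      = ∑ s ∈ Finset.range (p+2),
          (if s = p + 1 then ((p : ℝ) + 1) / (α + (l : ℝ) + (p : ℝ) + 2)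
           else (-1) ^ (p - s) * ((l : ℝ) + 1) *
             (pochN (α + 1) p * pochN (α + (l : ℝ) + 1) s)
             / (pochN (α + (l : ℝ) + 2) (p + 1) * pochN (α + 1) s) *
             ((α + (l : ℝ) + 2 * (s : ℝ) + 1) / (α + (l : ℝ) + 1)))
          * jacobiP s α (l:ℝ) (2*v-1) := by
  have h0p : (0:ℝ) ≤ (p:ℝ) := Nat.cast_nonneg p
  have hl0 : (0:ℝ) ≤ (l:ℝ) := Nat.cast_nonneg l
  have hK : (2*(p:ℝ)+α+((l:ℝ)+1)+2) ≠ 0 := by linarith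
  have hL1 := L1 α ((l:ℝ)+1) p v
  rw [conn α hα l p v, conn α hα l (p+1) v] at hL1
  apply mul_left_cancel₀ hK
  rw [hL1]
  simp only [Finset.mul_sum]
  rw [sum_guard p (fun s => ((p:ℝ)+((l:ℝ)+1)+1) *
        (((-1:ℝ)^(p-s) * (α+(l:ℝ)+2*(s:ℝ)+1) * pochN (α+(s:ℝ)+1) (p-s)
          / pochN (α+(l:ℝ)+(s:ℝ)+1) (p-s+1)) * jacobiP s α (l:ℝ) (2*v-1)))]
  rw [show p+1+1 = p+2 from rfl, ← Finset.sum_add_distrib]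
  apply Finset.sum_congr rfl
  intro s hs
  have hs2 : s < p+2 := Finset.mem_range.mp hs
  by_cases h : s = p+1
  · subst h
    rw [if_neg (by omega : ¬ p+1 ≤ p), if_pos rfl, zero_add]
    simp only [Nat.sub_self, pow_zero, pochN_zero, Nat.zero_add, pochN_one, one_mul, mul_one]
    rw [show ((p+1:ℕ):ℝ) = (p:ℝ)+1 from by push_cast; ring]
    have hd : α+(l:ℝ)+(p:ℝ)+2 ≠ 0 := by linarith
    have hd2 : α+(l:ℝ)+((p:ℝ)+1)+1 ≠ 0 := by linarith
    field_simp
    ring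
  · have hsp : s ≤ p := by omega
    rw [if_pos hsp, if_neg h]
    obtain ⟨k, rfl⟩ : ∃ k, p = s + k := ⟨p - s, by omega⟩
    simp only [show s+k-s = k from by omega, show s+k+1-s = k+1 from by omega]
    rw [show ((s+k:ℕ):ℝ) = (s:ℝ)+(k:ℝ) from by push_cast; ring]
    linear_combination (jacobiP s α (l:ℝ) (2*v-1)) * coeff_mid α hα l s k


/-- the 2D connection formula
`²R_{l+2+2p}^{l+2,α} = Σ_{s=0}^{p+1} ²C_{ps}^{l+2→l,α} ²R_{l+2s}^{l,α}`. -/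
theorem stmt15 (α : ℝ) (hα : -1 < α) (l p : ℕ) (ρ : ℝ) (hρ : ρ ∈ Set.Icc (0:ℝ) 1) :
    R2 α (l + 2) p ρ
      = ∑ s ∈ Finset.range (p + 2),
          (if s = p + 1 then ((p : ℝ) + 1) / (α + (l : ℝ) + (p : ℝ) + 2)
           else (-1) ^ (p - s) * ((l : ℝ) + 1) *
             (pochN (α + 1) p * pochN (α + (l : ℝ) + 1) s)
             / (pochN (α + (l : ℝ) + 2) (p + 1) * pochN (α + 1) s) *
             ((α + (l : ℝ) + 2 * (s : ℝ) + 1) / (α + (l : ℝ) + 1)))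
          * R2 α l s ρ := by
  have hkey := key α hα l p (ρ^2)
  unfold R2
  rw [show ((l+2:ℕ):ℝ) = (l:ℝ)+1+1 from by push_cast; ring, pow_add]
  calc ρ^l * ρ^2 * (1 - ρ^2)^α * jacobiP p α ((l:ℝ)+1+1) (2*ρ^2-1)
      = (ρ^l * (1 - ρ^2)^α) * (ρ^2 * jacobiP p α ((l:ℝ)+1+1) (2*ρ^2-1)) := by ring
    _ = (ρ^l * (1 - ρ^2)^α) * ∑ s ∈ Finset.range (p + 2),
          (if s = p + 1 then ((p : ℝ) + 1) / (α + (l : ℝ) + (p : ℝ) + 2)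
           else (-1) ^ (p - s) * ((l : ℝ) + 1) *
             (pochN (α + 1) p * pochN (α + (l : ℝ) + 1) s)
             / (pochN (α + (l : ℝ) + 2) (p + 1) * pochN (α + 1) s) *
             ((α + (l : ℝ) + 2 * (s : ℝ) + 1) / (α + (l : ℝ) + 1)))
          * jacobiP s α (l:ℝ) (2*ρ^2-1) := by rw [hkey]
    _ = _ := by
          rw [Finset.mul_sum]
          exact Finset.sum_congr rfl fun s _ => by ring
end

section
/- Let δ > −1 be real, and let l, η, p be nonnegative integers. Then with n = l + 2p, b_n^{l,δ} := ∫₀¹ ρ^{l} (1−ρ²)^{η+δ} R_n^{l,δ}(ρ) ρ² (1−ρ²)^{−δ} dρ = (1/2) (−1)^p · Γ(η+1)/(p! Γ(η−p+1)) · Γ(δ+η+1) Γ(l+p+3/2) / Γ(δ+η+l+p+5/2); in particular b_n^{l,δ} = 0 when p > η. -/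
open Real MeasureTheory

-- auxiliary lemmas

lemma betaInt {a b : ℝ} (ha : 0 < a) (hb : 0 < b) :
    IntervalIntegrable (fun x : ℝ => x ^ (a-1) * (1-x) ^ (b-1)) volume 0 1 ∧
    ∫ x in (0:ℝ)..1, x ^ (a-1) * (1-x) ^ (b-1)
      = Real.Gamma a * Real.Gamma b / Real.Gamma (a+b) := by
  have hconv := Complex.betaIntegral_convergent (u := (a:ℂ)) (v := (b:ℂ)) (by simpa) (by simpa)
  have hcongr : ∀ x : ℝ, 0 ≤ x → x ≤ 1 →
      ((x:ℂ) ^ ((a:ℂ) - 1) * (1 - (x:ℂ)) ^ ((b:ℂ) - 1))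
        = ((x ^ (a-1) * (1-x) ^ (b-1) : ℝ) : ℂ) := by
    intro x hx0 hx1'
    have hx1 : (0:ℝ) ≤ 1 - x := by linarith
    rw [show ((a:ℂ)-1) = ((a-1:ℝ):ℂ) from by push_cast; ring,
      show ((b:ℂ)-1) = ((b-1:ℝ):ℂ) from by push_cast; ring,
      show (1 - (x:ℂ)) = ((1-x:ℝ):ℂ) from by push_cast; ring,
      ← Complex.ofReal_cpow hx0, ← Complex.ofReal_cpow hx1, ← Complex.ofReal_mul]
  have hint : IntervalIntegrable (fun x : ℝ => x ^ (a-1) * (1-x) ^ (b-1)) volume 0 1 := by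
    have h2 : IntervalIntegrable
        (fun x : ℝ => ((x ^ (a-1) * (1-x) ^ (b-1) : ℝ) : ℂ)) volume 0 1 := by
      rw [intervalIntegrable_iff] at hconv ⊢
      refine hconv.congr_fun (fun x hx => ?_) measurableSet_uIoc
      rw [Set.uIoc_of_le (by norm_num : (0:ℝ) ≤ 1)] at hx
      exact hcongr x hx.1.le hx.2
    rw [intervalIntegrable_iff] at h2 ⊢
    have := h2.re
    simp at this
    rw [Set.uIoc_of_le (by norm_num : (0:ℝ) ≤ 1)]
    exact this
  refine ⟨hint, ?_⟩
  have hval := Complex.Gamma_mul_Gamma_eq_betaIntegral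
    (s := (a:ℂ)) (t := (b:ℂ)) (by simpa) (by simpa)
  rw [Complex.betaIntegral] at hval
  rw [intervalIntegral.integral_congr (g := fun x : ℝ => ((x ^ (a-1) * (1-x) ^ (b-1) : ℝ) : ℂ)) ?later] at hval
  case later =>
    intro x hx
    rw [Set.uIcc_of_le (by norm_num : (0:ℝ) ≤ 1)] at hx
    exact hcongr x hx.1 hx.2
  rw [intervalIntegral.integral_ofReal] at hval
  rw [← Complex.ofReal_add, Complex.Gamma_ofReal, Complex.Gamma_ofReal, Complex.Gamma_ofReal] at hval
  have hG : Real.Gamma (a+b) ≠ 0 := (Real.Gamma_pos_of_pos (by linarith)).ne'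
  have : Real.Gamma a * Real.Gamma b = Real.Gamma (a+b) * ∫ x in (0:ℝ)..1, x ^ (a-1) * (1-x) ^ (b-1) := by
    exact_mod_cast hval
  field_simp [hG] at this ⊢
  linarith [this]



lemma pochN_succ_left (x : ℝ) (k : ℕ) : pochN x (k+1) = x * pochN (x+1) k := by
  unfold pochN
  rw [Finset.prod_range_succ']
  simp only [Nat.cast_zero, add_zero, Nat.cast_add, Nat.cast_one]
  rw [mul_comm]
  congr 1
  exact Finset.prod_congr rfl (fun i _ => by push_cast; ring)

lemma pochN_succ_right (x : ℝ) (k : ℕ) : pochN x (k+1) = pochN x k * (x+k) := by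
  unfold pochN; rw [Finset.prod_range_succ]

lemma gamma_add_nat {x : ℝ} (hx : 0 < x) (k : ℕ) :
    Real.Gamma (x + k) = Real.Gamma x * pochN x k := by
  induction k with
  | zero => simp [pochN]
  | succ n ih =>
    have h1 : x + (n+1:ℕ) = (x + n) + 1 := by push_cast; ring
    rw [h1, Real.Gamma_add_one (by positivity), ih, pochN_succ_right]
    ring

lemma prod_desc (a : ℝ) (k : ℕ) :
    (∏ i ∈ Finset.range k, (a - i)) = pochN (a - k + 1) k := by
  unfold pochN
  rw [← Finset.prod_range_reflect (fun i => a - k + 1 + i) k]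
  refine Finset.prod_congr rfl (fun i hi => ?_)
  rw [Finset.mem_range] at hi
  have h1 : ((k - 1 - i : ℕ) : ℝ) = (k:ℝ) - 1 - i := by
    have : i ≤ k - 1 := by omega
    push_cast [Nat.sub_sub, Nat.cast_sub (by omega : 1 + i ≤ k)]
    ring
  rw [h1]; ring

lemma key_sum (p : ℕ) : ∀ d e : ℝ,
    ∑ j ∈ Finset.range (p+1), (-1:ℝ)^j * (p.choose j) * pochN (d+j+1) (p-j) * pochN (d+e+1) j
      = (-1)^p * ∏ i ∈ Finset.range p, (e - i) := by
  induction p with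
  | zero => intro d e; simp [pochN]
  | succ p ih =>
    intro d e
    have split : ∀ j ∈ Finset.range (p+2),
        (-1:ℝ)^j * ((p+1).choose j) * pochN (d+j+1) (p+1-j) * pochN (d+e+1) j
        = (-1:ℝ)^j * (p.choose j) * pochN (d+j+1) (p+1-j) * pochN (d+e+1) j
          + (-1:ℝ)^j * (p.choose (j-1) * if j = 0 then 0 else 1) * pochN (d+j+1) (p+1-j) * pochN (d+e+1) j := by
      intro j hj
      rcases j with _ | i
      · simp
      · rw [Nat.choose_succ_succ]
        push_cast
        simp
        ring
    rw [Finset.sum_congr rfl split, Finset.sum_add_distrib]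
    -- first sum: last term (j = p+1) vanishes since choose p (p+1) = 0
    rw [Finset.sum_range_succ (n := p+1)]
    simp only [Nat.choose_succ_self, Nat.cast_zero, mul_zero, zero_mul, mul_zero, add_zero]
    rw [Finset.sum_range_succ' _ (p+1)]
    simp only [Nat.add_sub_cancel, if_true, eq_self_iff_true, if_neg (Nat.succ_ne_zero _),
      mul_zero, zero_mul, mul_one, add_zero, Nat.succ_sub_succ, Nat.sub_zero]
    rw [← Finset.sum_add_distrib]
    have hsum : ∑ k ∈ Finset.range (p+1),
        ((-1:ℝ)^k * (p.choose k) * pochN (d+k+1) (p+1-k) * pochN (d+e+1) k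
          + (-1:ℝ)^(k+1) * (p.choose k) * pochN (d+(k+1:ℕ)+1) (p-k) * pochN (d+e+1) (k+1))
        = (-e) * ∑ k ∈ Finset.range (p+1),
            (-1:ℝ)^k * (p.choose k) * pochN ((d+1)+k+1) (p-k) * pochN ((d+1)+(e-1)+1) k := by
      rw [Finset.mul_sum]
      refine Finset.sum_congr rfl (fun k hk => ?_)
      rw [Finset.mem_range] at hk
      rw [show p+1-k = (p-k)+1 from by omega, pochN_succ_left, pochN_succ_right (d+e+1) k,
        show d+((k+1:ℕ):ℝ)+1 = d+(k:ℝ)+1+1 from by push_cast; ring,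
        show (d+1)+(k:ℝ)+1 = d+(k:ℝ)+1+1 from by ring,
        show (d+1)+(e-1)+1 = d+e+1 from by ring]
      ring
    rw [hsum, ih (d+1) (e-1), Finset.prod_range_succ' (fun i => e - (i:ℝ)) p]
    rw [show (∏ i ∈ Finset.range p, (e - ((i+1:ℕ):ℝ))) = ∏ i ∈ Finset.range p, ((e-1) - (i:ℝ)) from
      Finset.prod_congr rfl (fun i _ => by push_cast; ring)]
    push_cast
    ring

lemma I2 (k : ℕ) {s : ℝ} (hs : -1 < s) :
    IntervalIntegrable (fun x : ℝ => x^(2*k+2) * (1-x^2)^s) volume 0 1 ∧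
    ∫ x in (0:ℝ)..1, x^(2*k+2) * (1-x^2)^s
      = 1/2 * (Real.Gamma ((k:ℝ)+3/2) * Real.Gamma (s+1) / Real.Gamma ((k:ℝ)+s+5/2)) := by
  have hb : (0:ℝ) < s + 1 := by linarith
  have ha : (0:ℝ) < (k:ℝ) + 3/2 := by positivity
  obtain ⟨hJint, hJval⟩ := betaInt ha hb
  set g : ℝ → ℝ := fun u => u ^ ((k:ℝ)+3/2-1) * (1-u) ^ (s+1-1) with hg
  -- integrability of the target integrand
  have h1 : IntervalIntegrable (fun x : ℝ => (1-x) ^ s) volume 0 1 := by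
    have h0 := (betaInt (a := 1) (b := s+1) one_pos hb).1
    have heq : (fun x : ℝ => x ^ ((1:ℝ)-1) * (1-x) ^ (s+1-1)) = fun x : ℝ => (1-x)^s := by
      funext x
      norm_num [Real.rpow_zero]
    rwa [heq] at h0
  have hIcc1 : IntegrableOn (fun x : ℝ => (1-x) ^ s) (Set.Icc 0 1) volume := by
    rw [integrableOn_Icc_iff_integrableOn_Ioc]
    rw [intervalIntegrable_iff, Set.uIoc_of_le (by norm_num : (0:ℝ) ≤ 1)] at h1
    exact h1
  have hcont2 : ContinuousOn (fun x : ℝ => x^(2*k+2) * (1+x) ^ s) (Set.Icc 0 1) := by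
    refine (continuous_pow _).continuousOn.mul ?_
    refine ContinuousOn.rpow_const (by fun_prop) (fun x hx => Or.inl ?_)
    rcases hx with ⟨h0, _⟩; intro h; linarith [h0]
  have hIccMul : IntegrableOn (fun x : ℝ => (1-x) ^ s * (x^(2*k+2) * (1+x) ^ s))
      (Set.Icc 0 1) volume := hIcc1.mul_continuousOn hcont2 isCompact_Icc
  have hEq : ∀ x ∈ Set.Icc (0:ℝ) 1,
      (1-x) ^ s * (x^(2*k+2) * (1+x) ^ s) = x^(2*k+2) * (1-x^2)^s := by
    intro x hx
    rcases hx with ⟨h0, h1'⟩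
    have : (1 - x^2 : ℝ) = (1-x) * (1+x) := by ring
    rw [this, Real.mul_rpow (by linarith) (by linarith)]
    ring
  have hIccTarget : IntegrableOn (fun x : ℝ => x^(2*k+2) * (1-x^2)^s) (Set.Icc 0 1) volume :=
    hIccMul.congr_fun hEq measurableSet_Icc
  have hTargetII : IntervalIntegrable (fun x : ℝ => x^(2*k+2) * (1-x^2)^s) volume 0 1 := by
    rw [intervalIntegrable_iff, Set.uIoc_of_le (by norm_num : (0:ℝ) ≤ 1)]
    exact hIccTarget.mono_set Set.Ioc_subset_Icc_self
  refine ⟨hTargetII, ?_⟩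
  -- pointwise identity for the substitution
  have hpt : ∀ x ∈ Set.Icc (0:ℝ) 1,
      (2*x) • ((g ∘ (fun y : ℝ => y^2)) x) = 2 * (x^(2*k+2) * (1-x^2)^s) := by
    intro x hx
    have hx0 : (0:ℝ) ≤ x := hx.1
    have hh : (x^2 : ℝ) ^ ((k:ℝ)+3/2-1) = x ^ (2*k+1) := by
      rw [← Real.rpow_natCast x 2, ← Real.rpow_mul hx0, ← Real.rpow_natCast x (2*k+1)]
      congr 1
      push_cast
      ring
    simp only [g, Function.comp]
    rw [hh]
    have : (s + 1 - 1 : ℝ) = s := by ring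
    rw [this]
    rw [smul_eq_mul]
    ring
  -- the substitution
  have hsub : ∫ x in (0:ℝ)..1, (2*x) • ((g ∘ (fun y : ℝ => y^2)) x)
      = ∫ u in ((0:ℝ)^2)..((1:ℝ)^2), g u := by
    refine intervalIntegral.integral_comp_smul_deriv''' ?_ ?_ ?_ ?_ ?_
    · exact (continuous_pow 2).continuousOn
    · intro x hx
      simpa using ((hasDerivAt_pow 2 x).hasDerivWithinAt (s := Set.Ioi x))
    · refine ContinuousOn.mono ?_ (?_ : _ ⊆ Set.Ioo (0:ℝ) 1)
      · refine ContinuousOn.mul ?_ ?_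
        · exact ContinuousOn.rpow_const continuousOn_id (fun x hx => Or.inl hx.1.ne')
        · refine ContinuousOn.rpow_const (by fun_prop) (fun x hx => Or.inl ?_)
          intro h; rcases hx with ⟨_, h2⟩; linarith
      · rintro u ⟨x, hx, rfl⟩
        norm_num at hx
        simp only [Set.mem_Ioo]
        constructor
        · show (0:ℝ) < x^2; nlinarith [hx.1]
        · show x^2 < 1; nlinarith [hx.1, hx.2]
    · refine IntegrableOn.mono_set ?_ (?_ : _ ⊆ Set.Icc (0:ℝ) 1)
      · rw [integrableOn_Icc_iff_integrableOn_Ioc]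
        rw [intervalIntegrable_iff, Set.uIoc_of_le (by norm_num : (0:ℝ) ≤ 1)] at hJint
        exact hJint
      · rintro u ⟨x, hx, rfl⟩
        rw [Set.uIcc_of_le (by norm_num : (0:ℝ) ≤ 1)] at hx
        rcases hx with ⟨h0, h1'⟩
        refine ⟨by positivity, ?_⟩
        show x^2 ≤ 1
        nlinarith
    · rw [Set.uIcc_of_le (by norm_num : (0:ℝ) ≤ 1)]
      refine IntegrableOn.congr_fun ?_ (fun x hx => (hpt x hx).symm) measurableSet_Icc
      exact (hIccTarget.const_mul 2)
  rw [intervalIntegral.integral_congr (fun x hx => hpt x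
      (by rwa [Set.uIcc_of_le (by norm_num : (0:ℝ) ≤ 1)] at hx))] at hsub
  rw [intervalIntegral.integral_const_mul] at hsub
  norm_num at hsub
  rw [hJval] at hsub
  have hne : ((k:ℝ)+3/2+(s+1)) = ((k:ℝ)+s+5/2) := by ring
  rw [hne] at hsub
  linarith [hsub]

lemma Gratio (η p : ℕ) :
    Real.Gamma ((η:ℝ)+1) / Real.Gamma ((η:ℝ)-p+1) = ∏ i ∈ Finset.range p, ((η:ℝ) - i) := by
  rcases le_or_gt p η with h | h
  · have hpos : (0:ℝ) < (η:ℝ) - p + 1 := by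
      have : (p:ℝ) ≤ η := by exact_mod_cast h
      linarith
    have h1 : Real.Gamma ((η:ℝ)+1) = Real.Gamma ((η:ℝ)-p+1) * pochN ((η:ℝ)-p+1) p := by
      have := gamma_add_nat hpos p
      rw [show ((η:ℝ)-p+1) + p = (η:ℝ)+1 by ring] at this
      exact this
    have hGne := (Real.Gamma_pos_of_pos hpos).ne'
    rw [h1, prod_desc (η:ℝ) p, mul_div_cancel_left₀ _ hGne]
  · have hz : Real.Gamma ((η:ℝ)-p+1) = 0 := by
      rw [Real.Gamma_eq_zero_iff]
      refine ⟨p - (η+1), ?_⟩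
      push_cast [Nat.cast_sub (by omega : η+1 ≤ p)]
      ring
    rw [hz, div_zero]
    symm
    apply Finset.prod_eq_zero (Finset.mem_range.mpr h)
    simp

set_option maxHeartbeats 1600000 in
/-- the expansion coefficients
`b_n^{l,δ} = ∫₀¹ ρ^l (1−ρ²)^{η+δ} R_n^{l,δ}(ρ) ρ² (1−ρ²)^{−δ} dρ`, `n = l + 2p`;
`1/Γ(z) = 0` at nonpositive integers `z` (Mathlib's `Real.Gamma` vanishes there),
so in particular `b_n^{l,δ} = 0` when `p > η`. -/
theorem stmt19 (δ : ℝ) (hδ : -1 < δ) (l η p : ℕ) :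
    (∫ ρ in (0:ℝ)..1, ρ ^ l * (1 - ρ ^ 2) ^ ((η : ℝ) + δ) * R3 δ l p ρ * ρ ^ 2 * (1 - ρ ^ 2) ^ (-δ)
      = 1 / 2 * (-1) ^ p * (Real.Gamma ((η : ℝ) + 1) /
            ((Nat.factorial p : ℝ) * Real.Gamma ((η : ℝ) - p + 1))) *
          (Real.Gamma (δ + η + 1) * Real.Gamma ((l : ℝ) + p + 3 / 2) /
            Real.Gamma (δ + (η : ℝ) + l + p + 5 / 2)))
    ∧ (η < p →
        ∫ ρ in (0:ℝ)..1,
            ρ ^ l * (1 - ρ ^ 2) ^ ((η : ℝ) + δ) * R3 δ l p ρ * ρ ^ 2 * (1 - ρ ^ 2) ^ (-δ) = 0) := by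
  have main : ∫ ρ in (0:ℝ)..1, ρ ^ l * (1 - ρ ^ 2) ^ ((η : ℝ) + δ) * R3 δ l p ρ * ρ ^ 2 * (1 - ρ ^ 2) ^ (-δ)
      = 1 / 2 * (-1) ^ p * (Real.Gamma ((η : ℝ) + 1) /
            ((Nat.factorial p : ℝ) * Real.Gamma ((η : ℝ) - p + 1))) *
          (Real.Gamma (δ + η + 1) * Real.Gamma ((l : ℝ) + p + 3 / 2) /
            Real.Gamma (δ + (η : ℝ) + l + p + 5 / 2)) := by
    -- Step A: rewrite integrand as a finite sum a.e.
    have hne1 : ∀ᵐ (x:ℝ) ∂volume, x ≠ 1 := by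
      simp only [ae_iff, not_not, Set.setOf_eq_eq_singleton]
      exact Real.volume_singleton
    have hstepA : ∫ ρ in (0:ℝ)..1, ρ ^ l * (1 - ρ ^ 2) ^ ((η : ℝ) + δ) * R3 δ l p ρ * ρ ^ 2 * (1 - ρ ^ 2) ^ (-δ)
        = ∫ x in (0:ℝ)..1, ∑ j ∈ Finset.range (p+1),
            (genBinom ((p:ℝ)+δ) (p-j) * genBinom ((p:ℝ)+((l:ℝ)+1/2)) j * (-1)^j)
              * (x^(2*(l+(p-j))+2) * (1-x^2)^((η:ℝ)+δ+j)) := by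
      refine intervalIntegral.integral_congr_ae ?_
      filter_upwards [hne1] with x hx1 hx
      rw [Set.uIoc_of_le (by norm_num : (0:ℝ) ≤ 1)] at hx
      have hx0 : 0 < x := hx.1
      have hxlt : x < 1 := lt_of_le_of_ne hx.2 hx1
      have ht : (0:ℝ) < 1 - x^2 := by nlinarith
      simp only [R3, jacobiP, Finset.mul_sum, Finset.sum_mul]
      refine Finset.sum_congr rfl (fun j hj => ?_)
      rw [Finset.mem_range] at hj
      have hjp : j ≤ p := by omega
      have e1 : ((2*x^2-1-1)/2 : ℝ) = -(1-x^2) := by ring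
      have e2 : ((2*x^2-1+1)/2 : ℝ) = x^2 := by ring
      have hPow : x^(2*(l+(p-j))+2) = x^l * x^l * (x^2)^(p-j) * x^2 := by
        rw [← pow_mul, ← pow_add, ← pow_add, ← pow_add]
        congr 1
        omega
      have hrw : (1-x^2:ℝ)^((η:ℝ)+δ+(j:ℝ)) =
          (1-x^2)^((η:ℝ)+δ) * (1-x^2)^δ * (1-x^2)^(-δ) * (1-x^2:ℝ)^(j:ℕ) := by
        rw [← Real.rpow_natCast (1-x^2) j, ← Real.rpow_add ht, ← Real.rpow_add ht,
          ← Real.rpow_add ht]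
        congr 1
        ring
      rw [e1, e2, neg_pow, hPow, hrw]
      ring
    rw [hstepA]
    -- Step B: swap integral and sum
    have hintg : ∀ j ∈ Finset.range (p+1), -1 < (η:ℝ) + δ + (j:ℝ) := by
      intro j _
      have : (0:ℝ) ≤ (η:ℝ) + (j:ℝ) := by positivity
      linarith
    rw [intervalIntegral.integral_finset_sum (fun j hj =>
      ((I2 (l+(p-j)) (hintg j hj)).1).const_mul _)]
    simp only [intervalIntegral.integral_const_mul]
    -- Step C: plug in the value of each integral
    rw [Finset.sum_congr rfl (fun j hj => by rw [(I2 (l+(p-j)) (hintg j hj)).2])]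
    -- Step D: algebra
    have hD : (0:ℝ) < δ + ↑η + ↑l + ↑p + 5/2 := by
      have : (0:ℝ) ≤ (η:ℝ) + ↑l + ↑p := by positivity
      linarith
    have hDne : Real.Gamma (δ + ↑η + ↑l + ↑p + 5/2) ≠ 0 := (Real.Gamma_pos_of_pos hD).ne'
    have claim : ∀ j ∈ Finset.range (p+1),
        genBinom (↑p + δ) (p - j) * genBinom (↑p + (↑l + 1/2)) j * (-1)^j *
          (1/2 * (Real.Gamma (↑(l + (p - j)) + 3/2) * Real.Gamma (↑η + δ + ↑j + 1) /
            Real.Gamma (↑(l + (p - j)) + (↑η + δ + ↑j) + 5/2)))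
        = (1/2 * Real.Gamma (δ + ↑η + 1) * Real.Gamma ((l:ℝ) + ↑p + 3/2) /
            (Real.Gamma (δ + ↑η + ↑l + ↑p + 5/2) * (p.factorial : ℝ))) *
          ((-1:ℝ)^j * (p.choose j) * pochN (δ + ↑j + 1) (p - j) * pochN (δ + ↑η + 1) j) := by
      intro j hj
      rw [Finset.mem_range] at hj
      have hjp : j ≤ p := by omega
      have f1 : genBinom (↑p + δ) (p - j) = pochN (δ + ↑j + 1) (p - j) / ((p-j).factorial : ℝ) := by
        unfold genBinom
        rw [prod_desc, show ((p:ℝ) + δ - ((p-j:ℕ):ℝ) + 1) = δ + ↑j + 1 from by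
          push_cast [Nat.cast_sub hjp]; ring]
      have f2 : genBinom (↑p + ((l:ℝ)+1/2)) j
          = pochN ((p:ℝ) + ((l:ℝ)+1/2) - ↑j + 1) j / (j.factorial : ℝ) := by
        unfold genBinom
        rw [prod_desc]
      have hxpos : (0:ℝ) < (p:ℝ) + ((l:ℝ)+1/2) - ↑j + 1 := by
        have : (j:ℝ) ≤ p := by exact_mod_cast hjp
        have : (0:ℝ) ≤ (l:ℝ) := by positivity
        linarith
      have f3 : Real.Gamma ((l:ℝ) + ↑p + 3/2)
          = Real.Gamma (↑(l + (p - j)) + 3/2) * pochN ((p:ℝ) + ((l:ℝ)+1/2) - ↑j + 1) j := by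
        have := gamma_add_nat hxpos j
        rw [show ((p:ℝ) + ((l:ℝ)+1/2) - ↑j + 1) + ↑j = (l:ℝ) + ↑p + 3/2 from by ring] at this
        rw [this, show ((l + (p - j) : ℕ) : ℝ) + 3/2 = (p:ℝ) + ((l:ℝ)+1/2) - ↑j + 1 from by
          push_cast [Nat.cast_sub hjp]; ring]
      have f4 : Real.Gamma (↑η + δ + ↑j + 1) = Real.Gamma (δ + ↑η + 1) * pochN (δ + ↑η + 1) j := by
        have hc : (0:ℝ) < δ + ↑η + 1 := by
          have : (0:ℝ) ≤ (η:ℝ) := by positivity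
          linarith
        have := gamma_add_nat hc j
        rw [show (δ + ↑η + 1) + (j:ℝ) = ↑η + δ + ↑j + 1 from by ring] at this
        exact this
      have f5 : ((l + (p - j) : ℕ) : ℝ) + (↑η + δ + ↑j) + 5/2 = δ + ↑η + ↑l + ↑p + 5/2 := by
        push_cast [Nat.cast_sub hjp]; ring
      have f6 : ((p.choose j : ℕ) : ℝ) = (p.factorial : ℝ) / ((j.factorial : ℝ) * ((p-j).factorial : ℝ)) := by
        rw [eq_div_iff (by positivity), ← mul_assoc]
        exact_mod_cast Nat.choose_mul_factorial_mul_factorial hjp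
      rw [f1, f2, f4, f5, f3, f6]
      clear f1 f2 f3 f4 f5 f6
      have hj1 : ((j.factorial : ℕ) : ℝ) ≠ 0 := by positivity
      have hj2 : (((p-j).factorial : ℕ) : ℝ) ≠ 0 := by positivity
      have hp1 : ((p.factorial : ℕ) : ℝ) ≠ 0 := by positivity
      field_simp
    rw [Finset.sum_congr rfl claim, ← Finset.mul_sum, key_sum p δ (η:ℝ)]
    rw [div_mul_eq_div_div_swap (Real.Gamma ((η:ℝ)+1)), Gratio η p]
    have hp1 : ((p.factorial : ℕ) : ℝ) ≠ 0 := by positivity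
    field_simp
  refine ⟨main, fun hlt => ?_⟩
  rw [main]
  have hz : Real.Gamma ((η:ℝ)-p+1) = 0 := by
    rw [Real.Gamma_eq_zero_iff]
    refine ⟨p - (η+1), ?_⟩
    push_cast [Nat.cast_sub (by omega : η+1 ≤ p)]
    ring
  rw [hz]
  simp
end
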